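/- arXiv:1712.03772 — 6 statements merged into one kernel-verified Lean document; each statement's English description precedes it below -/
import Mathlib

section
/- For every x ∈ (0, π/2): (16/14175)·x⁷ + (8/467775)·x⁹ < 1/x + sin(2x)/(2x²) − 2·cot x − (8/45)x³ + (8/945)x⁵ < (16/14175)·x⁷ + (2/π)⁹·(2/π − π³/45 + π⁵/3780 − π⁷/113400)·x⁹. -/
set_option maxHeartbeats 1000000
open Real Set

lemma nonneg_of_deriv (f f' : ℝ → ℝ) (hd : ∀ y, HasDerivAt f (f' y) y)
    (h0 : 0 ≤ f 0) (h' : ∀ y, 0 ≤ y → 0 ≤ f' y) : ∀ y, 0 ≤ y → 0 ≤ f y := by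
  intro y hy
  have hm : MonotoneOn f (Set.Ici 0) := by
    apply monotoneOn_of_deriv_nonneg (convex_Ici 0)
    · exact fun z _ => ((hd z).differentiableAt).continuousAt.continuousWithinAt
    · exact fun z _ => ((hd z).differentiableAt).differentiableWithinAt
    · intro z hz
      rw [(hd z).deriv]
      refine h' z ?_
      rw [interior_Ici] at hz
      exact le_of_lt hz
  have h2 := hm Set.self_mem_Ici (by exact hy) hy
  linarith


lemma sin_ub1 : ∀ y : ℝ, 0 ≤ y → Real.sin y ≤ y := by
  have H := nonneg_of_deriv (fun y => y - Real.sin y) (fun y => 1 - Real.cos y)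
    (fun y => (hasDerivAt_id y).sub (Real.hasDerivAt_sin y))
    (by simp)
    (fun y _ => by show (0:ℝ) ≤ 1 - Real.cos y; nlinarith [Real.cos_le_one y])
  intro y hy; have h2 := H y hy; linarith


lemma cos_lb2 : ∀ y : ℝ, 0 ≤ y → (1 - y^2/2) ≤ Real.cos y := by
  have H := nonneg_of_deriv (fun y => Real.cos y - (1 - y^2/2))
    (fun y => (y) - Real.sin y)
    (fun y => by
      have h := (Real.hasDerivAt_cos y).sub ((hasDerivAt_const y (1:ℝ)).sub ((hasDerivAt_pow 2 y).div_const 2))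
      refine h.congr_deriv ?_
      push_cast; ring)
    (by norm_num)
    (fun y hy => by
      show (0:ℝ) ≤ (y) - Real.sin y
      have h3 := sin_ub1 y hy
      linarith)
  intro y hy
  have h2 := H y hy
  linarith

lemma sin_lb3 : ∀ y : ℝ, 0 ≤ y → (y - y^3/6) ≤ Real.sin y := by
  have H := nonneg_of_deriv (fun y => Real.sin y - (y - y^3/6))
    (fun y => Real.cos y - (1 - y^2/2))
    (fun y => by
      have h := (Real.hasDerivAt_sin y).sub ((hasDerivAt_id' y).sub ((hasDerivAt_pow 3 y).div_const 6))
      refine h.congr_deriv ?_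
      push_cast; ring)
    (by norm_num)
    (fun y hy => by
      show (0:ℝ) ≤ Real.cos y - (1 - y^2/2)
      have h3 := cos_lb2 y hy
      linarith)
  intro y hy
  have h2 := H y hy
  linarith

lemma cos_ub4 : ∀ y : ℝ, 0 ≤ y → Real.cos y ≤ (1 - y^2/2 + y^4/24) := by
  have H := nonneg_of_deriv (fun y => (1 - y^2/2 + y^4/24) - Real.cos y)
    (fun y => Real.sin y - (y - y^3/6))
    (fun y => by
      have h := ((((hasDerivAt_const y (1:ℝ)).sub ((hasDerivAt_pow 2 y).div_const 2)).add ((hasDerivAt_pow 4 y).div_const 24))).sub (Real.hasDerivAt_cos y)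
      refine h.congr_deriv ?_
      push_cast; ring)
    (by norm_num)
    (fun y hy => by
      show (0:ℝ) ≤ Real.sin y - (y - y^3/6)
      have h3 := sin_lb3 y hy
      linarith)
  intro y hy
  have h2 := H y hy
  linarith

lemma sin_ub5 : ∀ y : ℝ, 0 ≤ y → Real.sin y ≤ (y - y^3/6 + y^5/120) := by
  have H := nonneg_of_deriv (fun y => (y - y^3/6 + y^5/120) - Real.sin y)
    (fun y => (1 - y^2/2 + y^4/24) - Real.cos y)
    (fun y => by
      have h := ((((hasDerivAt_id' y).sub ((hasDerivAt_pow 3 y).div_const 6)).add ((hasDerivAt_pow 5 y).div_const 120))).sub (Real.hasDerivAt_sin y)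
      refine h.congr_deriv ?_
      push_cast; ring)
    (by norm_num)
    (fun y hy => by
      show (0:ℝ) ≤ (1 - y^2/2 + y^4/24) - Real.cos y
      have h3 := cos_ub4 y hy
      linarith)
  intro y hy
  have h2 := H y hy
  linarith

lemma cos_lb6 : ∀ y : ℝ, 0 ≤ y → (1 - y^2/2 + y^4/24 - y^6/720) ≤ Real.cos y := by
  have H := nonneg_of_deriv (fun y => Real.cos y - (1 - y^2/2 + y^4/24 - y^6/720))
    (fun y => (y - y^3/6 + y^5/120) - Real.sin y)
    (fun y => by
      have h := (Real.hasDerivAt_cos y).sub ((((hasDerivAt_const y (1:ℝ)).sub ((hasDerivAt_pow 2 y).div_const 2)).add ((hasDerivAt_pow 4 y).div_const 24)).sub ((hasDerivAt_pow 6 y).div_const 720))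
      refine h.congr_deriv ?_
      push_cast; ring)
    (by norm_num)
    (fun y hy => by
      show (0:ℝ) ≤ (y - y^3/6 + y^5/120) - Real.sin y
      have h3 := sin_ub5 y hy
      linarith)
  intro y hy
  have h2 := H y hy
  linarith

lemma sin_lb7 : ∀ y : ℝ, 0 ≤ y → (y - y^3/6 + y^5/120 - y^7/5040) ≤ Real.sin y := by
  have H := nonneg_of_deriv (fun y => Real.sin y - (y - y^3/6 + y^5/120 - y^7/5040))
    (fun y => Real.cos y - (1 - y^2/2 + y^4/24 - y^6/720))
    (fun y => by
      have h := (Real.hasDerivAt_sin y).sub ((((hasDerivAt_id' y).sub ((hasDerivAt_pow 3 y).div_const 6)).add ((hasDerivAt_pow 5 y).div_const 120)).sub ((hasDerivAt_pow 7 y).div_const 5040))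
      refine h.congr_deriv ?_
      push_cast; ring)
    (by norm_num)
    (fun y hy => by
      show (0:ℝ) ≤ Real.cos y - (1 - y^2/2 + y^4/24 - y^6/720)
      have h3 := cos_lb6 y hy
      linarith)
  intro y hy
  have h2 := H y hy
  linarith

lemma cos_ub8 : ∀ y : ℝ, 0 ≤ y → Real.cos y ≤ (1 - y^2/2 + y^4/24 - y^6/720 + y^8/40320) := by
  have H := nonneg_of_deriv (fun y => (1 - y^2/2 + y^4/24 - y^6/720 + y^8/40320) - Real.cos y)
    (fun y => Real.sin y - (y - y^3/6 + y^5/120 - y^7/5040))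
    (fun y => by
      have h := ((((((hasDerivAt_const y (1:ℝ)).sub ((hasDerivAt_pow 2 y).div_const 2)).add ((hasDerivAt_pow 4 y).div_const 24)).sub ((hasDerivAt_pow 6 y).div_const 720)).add ((hasDerivAt_pow 8 y).div_const 40320))).sub (Real.hasDerivAt_cos y)
      refine h.congr_deriv ?_
      push_cast; ring)
    (by norm_num)
    (fun y hy => by
      show (0:ℝ) ≤ Real.sin y - (y - y^3/6 + y^5/120 - y^7/5040)
      have h3 := sin_lb7 y hy
      linarith)
  intro y hy
  have h2 := H y hy
  linarith

lemma sin_ub9 : ∀ y : ℝ, 0 ≤ y → Real.sin y ≤ (y - y^3/6 + y^5/120 - y^7/5040 + y^9/362880) := by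
  have H := nonneg_of_deriv (fun y => (y - y^3/6 + y^5/120 - y^7/5040 + y^9/362880) - Real.sin y)
    (fun y => (1 - y^2/2 + y^4/24 - y^6/720 + y^8/40320) - Real.cos y)
    (fun y => by
      have h := ((((((hasDerivAt_id' y).sub ((hasDerivAt_pow 3 y).div_const 6)).add ((hasDerivAt_pow 5 y).div_const 120)).sub ((hasDerivAt_pow 7 y).div_const 5040)).add ((hasDerivAt_pow 9 y).div_const 362880))).sub (Real.hasDerivAt_sin y)
      refine h.congr_deriv ?_
      push_cast; ring)
    (by norm_num)
    (fun y hy => by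
      show (0:ℝ) ≤ (1 - y^2/2 + y^4/24 - y^6/720 + y^8/40320) - Real.cos y
      have h3 := cos_ub8 y hy
      linarith)
  intro y hy
  have h2 := H y hy
  linarith

lemma cos_lb10 : ∀ y : ℝ, 0 ≤ y → (1 - y^2/2 + y^4/24 - y^6/720 + y^8/40320 - y^10/3628800) ≤ Real.cos y := by
  have H := nonneg_of_deriv (fun y => Real.cos y - (1 - y^2/2 + y^4/24 - y^6/720 + y^8/40320 - y^10/3628800))
    (fun y => (y - y^3/6 + y^5/120 - y^7/5040 + y^9/362880) - Real.sin y)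
    (fun y => by
      have h := (Real.hasDerivAt_cos y).sub ((((((hasDerivAt_const y (1:ℝ)).sub ((hasDerivAt_pow 2 y).div_const 2)).add ((hasDerivAt_pow 4 y).div_const 24)).sub ((hasDerivAt_pow 6 y).div_const 720)).add ((hasDerivAt_pow 8 y).div_const 40320)).sub ((hasDerivAt_pow 10 y).div_const 3628800))
      refine h.congr_deriv ?_
      push_cast; ring)
    (by norm_num)
    (fun y hy => by
      show (0:ℝ) ≤ (y - y^3/6 + y^5/120 - y^7/5040 + y^9/362880) - Real.sin y
      have h3 := sin_ub9 y hy
      linarith)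
  intro y hy
  have h2 := H y hy
  linarith

lemma sin_lb11 : ∀ y : ℝ, 0 ≤ y → (y - y^3/6 + y^5/120 - y^7/5040 + y^9/362880 - y^11/39916800) ≤ Real.sin y := by
  have H := nonneg_of_deriv (fun y => Real.sin y - (y - y^3/6 + y^5/120 - y^7/5040 + y^9/362880 - y^11/39916800))
    (fun y => Real.cos y - (1 - y^2/2 + y^4/24 - y^6/720 + y^8/40320 - y^10/3628800))
    (fun y => by
      have h := (Real.hasDerivAt_sin y).sub ((((((hasDerivAt_id' y).sub ((hasDerivAt_pow 3 y).div_const 6)).add ((hasDerivAt_pow 5 y).div_const 120)).sub ((hasDerivAt_pow 7 y).div_const 5040)).add ((hasDerivAt_pow 9 y).div_const 362880)).sub ((hasDerivAt_pow 11 y).div_const 39916800))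
      refine h.congr_deriv ?_
      push_cast; ring)
    (by norm_num)
    (fun y hy => by
      show (0:ℝ) ≤ Real.cos y - (1 - y^2/2 + y^4/24 - y^6/720 + y^8/40320 - y^10/3628800)
      have h3 := cos_lb10 y hy
      linarith)
  intro y hy
  have h2 := H y hy
  linarith

lemma cos_ub12 : ∀ y : ℝ, 0 ≤ y → Real.cos y ≤ (1 - y^2/2 + y^4/24 - y^6/720 + y^8/40320 - y^10/3628800 + y^12/479001600) := by
  have H := nonneg_of_deriv (fun y => (1 - y^2/2 + y^4/24 - y^6/720 + y^8/40320 - y^10/3628800 + y^12/479001600) - Real.cos y)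
    (fun y => Real.sin y - (y - y^3/6 + y^5/120 - y^7/5040 + y^9/362880 - y^11/39916800))
    (fun y => by
      have h := ((((((((hasDerivAt_const y (1:ℝ)).sub ((hasDerivAt_pow 2 y).div_const 2)).add ((hasDerivAt_pow 4 y).div_const 24)).sub ((hasDerivAt_pow 6 y).div_const 720)).add ((hasDerivAt_pow 8 y).div_const 40320)).sub ((hasDerivAt_pow 10 y).div_const 3628800)).add ((hasDerivAt_pow 12 y).div_const 479001600))).sub (Real.hasDerivAt_cos y)
      refine h.congr_deriv ?_
      push_cast; ring)
    (by norm_num)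
    (fun y hy => by
      show (0:ℝ) ≤ Real.sin y - (y - y^3/6 + y^5/120 - y^7/5040 + y^9/362880 - y^11/39916800)
      have h3 := sin_lb11 y hy
      linarith)
  intro y hy
  have h2 := H y hy
  linarith

lemma sin_ub13 : ∀ y : ℝ, 0 ≤ y → Real.sin y ≤ (y - y^3/6 + y^5/120 - y^7/5040 + y^9/362880 - y^11/39916800 + y^13/6227020800) := by
  have H := nonneg_of_deriv (fun y => (y - y^3/6 + y^5/120 - y^7/5040 + y^9/362880 - y^11/39916800 + y^13/6227020800) - Real.sin y)
    (fun y => (1 - y^2/2 + y^4/24 - y^6/720 + y^8/40320 - y^10/3628800 + y^12/479001600) - Real.cos y)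
    (fun y => by
      have h := ((((((((hasDerivAt_id' y).sub ((hasDerivAt_pow 3 y).div_const 6)).add ((hasDerivAt_pow 5 y).div_const 120)).sub ((hasDerivAt_pow 7 y).div_const 5040)).add ((hasDerivAt_pow 9 y).div_const 362880)).sub ((hasDerivAt_pow 11 y).div_const 39916800)).add ((hasDerivAt_pow 13 y).div_const 6227020800))).sub (Real.hasDerivAt_sin y)
      refine h.congr_deriv ?_
      push_cast; ring)
    (by norm_num)
    (fun y hy => by
      show (0:ℝ) ≤ (1 - y^2/2 + y^4/24 - y^6/720 + y^8/40320 - y^10/3628800 + y^12/479001600) - Real.cos y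
      have h3 := cos_ub12 y hy
      linarith)
  intro y hy
  have h2 := H y hy
  linarith

lemma cos_lb14 : ∀ y : ℝ, 0 ≤ y → (1 - y^2/2 + y^4/24 - y^6/720 + y^8/40320 - y^10/3628800 + y^12/479001600 - y^14/87178291200) ≤ Real.cos y := by
  have H := nonneg_of_deriv (fun y => Real.cos y - (1 - y^2/2 + y^4/24 - y^6/720 + y^8/40320 - y^10/3628800 + y^12/479001600 - y^14/87178291200))
    (fun y => (y - y^3/6 + y^5/120 - y^7/5040 + y^9/362880 - y^11/39916800 + y^13/6227020800) - Real.sin y)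
    (fun y => by
      have h := (Real.hasDerivAt_cos y).sub ((((((((hasDerivAt_const y (1:ℝ)).sub ((hasDerivAt_pow 2 y).div_const 2)).add ((hasDerivAt_pow 4 y).div_const 24)).sub ((hasDerivAt_pow 6 y).div_const 720)).add ((hasDerivAt_pow 8 y).div_const 40320)).sub ((hasDerivAt_pow 10 y).div_const 3628800)).add ((hasDerivAt_pow 12 y).div_const 479001600)).sub ((hasDerivAt_pow 14 y).div_const 87178291200))
      refine h.congr_deriv ?_
      push_cast; ring)
    (by norm_num)
    (fun y hy => by
      show (0:ℝ) ≤ (y - y^3/6 + y^5/120 - y^7/5040 + y^9/362880 - y^11/39916800 + y^13/6227020800) - Real.sin y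
      have h3 := sin_ub13 y hy
      linarith)
  intro y hy
  have h2 := H y hy
  linarith

lemma sin_lb15 : ∀ y : ℝ, 0 ≤ y → (y - y^3/6 + y^5/120 - y^7/5040 + y^9/362880 - y^11/39916800 + y^13/6227020800 - y^15/1307674368000) ≤ Real.sin y := by
  have H := nonneg_of_deriv (fun y => Real.sin y - (y - y^3/6 + y^5/120 - y^7/5040 + y^9/362880 - y^11/39916800 + y^13/6227020800 - y^15/1307674368000))
    (fun y => Real.cos y - (1 - y^2/2 + y^4/24 - y^6/720 + y^8/40320 - y^10/3628800 + y^12/479001600 - y^14/87178291200))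
    (fun y => by
      have h := (Real.hasDerivAt_sin y).sub ((((((((hasDerivAt_id' y).sub ((hasDerivAt_pow 3 y).div_const 6)).add ((hasDerivAt_pow 5 y).div_const 120)).sub ((hasDerivAt_pow 7 y).div_const 5040)).add ((hasDerivAt_pow 9 y).div_const 362880)).sub ((hasDerivAt_pow 11 y).div_const 39916800)).add ((hasDerivAt_pow 13 y).div_const 6227020800)).sub ((hasDerivAt_pow 15 y).div_const 1307674368000))
      refine h.congr_deriv ?_
      push_cast; ring)
    (by norm_num)
    (fun y hy => by
      show (0:ℝ) ≤ Real.cos y - (1 - y^2/2 + y^4/24 - y^6/720 + y^8/40320 - y^10/3628800 + y^12/479001600 - y^14/87178291200)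
      have h3 := cos_lb14 y hy
      linarith)
  intro y hy
  have h2 := H y hy
  linarith

lemma cos_ub16 : ∀ y : ℝ, 0 ≤ y → Real.cos y ≤ (1 - y^2/2 + y^4/24 - y^6/720 + y^8/40320 - y^10/3628800 + y^12/479001600 - y^14/87178291200 + y^16/20922789888000) := by
  have H := nonneg_of_deriv (fun y => (1 - y^2/2 + y^4/24 - y^6/720 + y^8/40320 - y^10/3628800 + y^12/479001600 - y^14/87178291200 + y^16/20922789888000) - Real.cos y)
    (fun y => Real.sin y - (y - y^3/6 + y^5/120 - y^7/5040 + y^9/362880 - y^11/39916800 + y^13/6227020800 - y^15/1307674368000))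
    (fun y => by
      have h := ((((((((((hasDerivAt_const y (1:ℝ)).sub ((hasDerivAt_pow 2 y).div_const 2)).add ((hasDerivAt_pow 4 y).div_const 24)).sub ((hasDerivAt_pow 6 y).div_const 720)).add ((hasDerivAt_pow 8 y).div_const 40320)).sub ((hasDerivAt_pow 10 y).div_const 3628800)).add ((hasDerivAt_pow 12 y).div_const 479001600)).sub ((hasDerivAt_pow 14 y).div_const 87178291200)).add ((hasDerivAt_pow 16 y).div_const 20922789888000))).sub (Real.hasDerivAt_cos y)
      refine h.congr_deriv ?_
      push_cast; ring)
    (by norm_num)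
    (fun y hy => by
      show (0:ℝ) ≤ Real.sin y - (y - y^3/6 + y^5/120 - y^7/5040 + y^9/362880 - y^11/39916800 + y^13/6227020800 - y^15/1307674368000)
      have h3 := sin_lb15 y hy
      linarith)
  intro y hy
  have h2 := H y hy
  linarith
lemma Qpos (x : ℝ) (h2 : x^2 ≤ 5/2) : 0 < (6368/638512875) - (1552/1915538625)*(x^2) + (34007/1120863744000)*(x^2)^2 - (1061383/1412288317440000)*(x^2)^3 + (5963/413090979840000)*(x^2)^4 - (607141/2609908810629120000)*(x^2)^5 + (4245883/1357152581527142400000)*(x^2)^6 - (6284039/171001225272419942400000)*(x^2)^7 + (3789719/10260073516345196544000000)*(x^2)^8 - (65123/20520147032690393088000000)*(x^2)^9 + (61/2632322068333461504000000)*(x^2)^10 - (80771/568818475746177696399360000000)*(x^2)^11 + (541/758424634328236928532480000000)*(x^2)^12 - (2501/887356822164037206383001600000000)*(x^2)^13 + (43/5324140932984223238298009600000000)*(x^2)^14 - (1/74537973061779125336172134400000000)*(x^2)^15 := by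
  have hp : (0:ℝ) ≤ x^2 := sq_nonneg x
  have hk1 : (x^2)^1 ≤ (5/2:ℝ)^1 := pow_le_pow_left₀ hp h2 1
  have hn1 : (-1552/1915538625:ℝ) * (5/2:ℝ)^1 ≤ (-1552/1915538625:ℝ) * (x^2)^1 := mul_le_mul_of_nonpos_left hk1 (by norm_num)
  have hp2 : (0:ℝ) ≤ (34007/1120863744000:ℝ) * (x^2)^2 := by positivity
  have hk3 : (x^2)^3 ≤ (5/2:ℝ)^3 := pow_le_pow_left₀ hp h2 3
  have hn3 : (-1061383/1412288317440000:ℝ) * (5/2:ℝ)^3 ≤ (-1061383/1412288317440000:ℝ) * (x^2)^3 := mul_le_mul_of_nonpos_left hk3 (by norm_num)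
  have hp4 : (0:ℝ) ≤ (5963/413090979840000:ℝ) * (x^2)^4 := by positivity
  have hk5 : (x^2)^5 ≤ (5/2:ℝ)^5 := pow_le_pow_left₀ hp h2 5
  have hn5 : (-607141/2609908810629120000:ℝ) * (5/2:ℝ)^5 ≤ (-607141/2609908810629120000:ℝ) * (x^2)^5 := mul_le_mul_of_nonpos_left hk5 (by norm_num)
  have hp6 : (0:ℝ) ≤ (4245883/1357152581527142400000:ℝ) * (x^2)^6 := by positivity
  have hk7 : (x^2)^7 ≤ (5/2:ℝ)^7 := pow_le_pow_left₀ hp h2 7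
  have hn7 : (-6284039/171001225272419942400000:ℝ) * (5/2:ℝ)^7 ≤ (-6284039/171001225272419942400000:ℝ) * (x^2)^7 := mul_le_mul_of_nonpos_left hk7 (by norm_num)
  have hp8 : (0:ℝ) ≤ (3789719/10260073516345196544000000:ℝ) * (x^2)^8 := by positivity
  have hk9 : (x^2)^9 ≤ (5/2:ℝ)^9 := pow_le_pow_left₀ hp h2 9
  have hn9 : (-65123/20520147032690393088000000:ℝ) * (5/2:ℝ)^9 ≤ (-65123/20520147032690393088000000:ℝ) * (x^2)^9 := mul_le_mul_of_nonpos_left hk9 (by norm_num)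
  have hp10 : (0:ℝ) ≤ (61/2632322068333461504000000:ℝ) * (x^2)^10 := by positivity
  have hk11 : (x^2)^11 ≤ (5/2:ℝ)^11 := pow_le_pow_left₀ hp h2 11
  have hn11 : (-80771/568818475746177696399360000000:ℝ) * (5/2:ℝ)^11 ≤ (-80771/568818475746177696399360000000:ℝ) * (x^2)^11 := mul_le_mul_of_nonpos_left hk11 (by norm_num)
  have hp12 : (0:ℝ) ≤ (541/758424634328236928532480000000:ℝ) * (x^2)^12 := by positivity
  have hk13 : (x^2)^13 ≤ (5/2:ℝ)^13 := pow_le_pow_left₀ hp h2 13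
  have hn13 : (-2501/887356822164037206383001600000000:ℝ) * (5/2:ℝ)^13 ≤ (-2501/887356822164037206383001600000000:ℝ) * (x^2)^13 := mul_le_mul_of_nonpos_left hk13 (by norm_num)
  have hp14 : (0:ℝ) ≤ (43/5324140932984223238298009600000000:ℝ) * (x^2)^14 := by positivity
  have hk15 : (x^2)^15 ≤ (5/2:ℝ)^15 := pow_le_pow_left₀ hp h2 15
  have hn15 : (-1/74537973061779125336172134400000000:ℝ) * (5/2:ℝ)^15 ≤ (-1/74537973061779125336172134400000000:ℝ) * (x^2)^15 := mul_le_mul_of_nonpos_left hk15 (by norm_num)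
  linarith

lemma Q2pos (x : ℝ) (h2 : x^2 ≤ 5/2) : 0 < (6368/638512875) - (1271429/784604620800)*(x^2) + (134603291/941525544960000)*(x^2)^2 - (362393533/39544072888320000)*(x^2)^3 + (265508839/579979735695360000)*(x^2)^4 - (2831631181/156594528637747200000)*(x^2)^5 + (1864067213/3257166195665141760000)*(x^2)^6 - (50507502989/3420024505448398848000000)*(x^2)^7 + (2594249831/8208058813076157235200000)*(x^2)^8 - (571673/100506842609095802880000)*(x^2)^9 + (65902011829/758424634328236928532480000000)*(x^2)^10 - (5152800241/4550547805969421571194880000000)*(x^2)^11 + (12184389317/968025624178949679690547200000000)*(x^2)^12 - (20223751/170372509855495143625536307200000)*(x^2)^13 + (68500561/73016789938069347268086988800000000)*(x^2)^14 - (3251497/535456459545841879965971251200000000)*(x^2)^15 + (629/20398341316032071617751285760000000)*(x^2)^16 - (25211/224891713009253589585707925504000000000)*(x^2)^17 + (3551/16192203336666258450170970636288000000000)*(x^2)^18 + (89/420997286753322719704445236543488000000000)*(x^2)^19 - (1/459269767367261148768485712592896000000000)*(x^2)^20 := by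
  have hp : (0:ℝ) ≤ x^2 := sq_nonneg x
  have hk1 : (x^2)^1 ≤ (5/2:ℝ)^1 := pow_le_pow_left₀ hp h2 1
  have hn1 : (-1271429/784604620800:ℝ) * (5/2:ℝ)^1 ≤ (-1271429/784604620800:ℝ) * (x^2)^1 := mul_le_mul_of_nonpos_left hk1 (by norm_num)
  have hp2 : (0:ℝ) ≤ (134603291/941525544960000:ℝ) * (x^2)^2 := by positivity
  have hk3 : (x^2)^3 ≤ (5/2:ℝ)^3 := pow_le_pow_left₀ hp h2 3
  have hn3 : (-362393533/39544072888320000:ℝ) * (5/2:ℝ)^3 ≤ (-362393533/39544072888320000:ℝ) * (x^2)^3 := mul_le_mul_of_nonpos_left hk3 (by norm_num)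
  have hp4 : (0:ℝ) ≤ (265508839/579979735695360000:ℝ) * (x^2)^4 := by positivity
  have hk5 : (x^2)^5 ≤ (5/2:ℝ)^5 := pow_le_pow_left₀ hp h2 5
  have hn5 : (-2831631181/156594528637747200000:ℝ) * (5/2:ℝ)^5 ≤ (-2831631181/156594528637747200000:ℝ) * (x^2)^5 := mul_le_mul_of_nonpos_left hk5 (by norm_num)
  have hp6 : (0:ℝ) ≤ (1864067213/3257166195665141760000:ℝ) * (x^2)^6 := by positivity
  have hk7 : (x^2)^7 ≤ (5/2:ℝ)^7 := pow_le_pow_left₀ hp h2 7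
  have hn7 : (-50507502989/3420024505448398848000000:ℝ) * (5/2:ℝ)^7 ≤ (-50507502989/3420024505448398848000000:ℝ) * (x^2)^7 := mul_le_mul_of_nonpos_left hk7 (by norm_num)
  have hp8 : (0:ℝ) ≤ (2594249831/8208058813076157235200000:ℝ) * (x^2)^8 := by positivity
  have hk9 : (x^2)^9 ≤ (5/2:ℝ)^9 := pow_le_pow_left₀ hp h2 9
  have hn9 : (-571673/100506842609095802880000:ℝ) * (5/2:ℝ)^9 ≤ (-571673/100506842609095802880000:ℝ) * (x^2)^9 := mul_le_mul_of_nonpos_left hk9 (by norm_num)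
  have hp10 : (0:ℝ) ≤ (65902011829/758424634328236928532480000000:ℝ) * (x^2)^10 := by positivity
  have hk11 : (x^2)^11 ≤ (5/2:ℝ)^11 := pow_le_pow_left₀ hp h2 11
  have hn11 : (-5152800241/4550547805969421571194880000000:ℝ) * (5/2:ℝ)^11 ≤ (-5152800241/4550547805969421571194880000000:ℝ) * (x^2)^11 := mul_le_mul_of_nonpos_left hk11 (by norm_num)
  have hp12 : (0:ℝ) ≤ (12184389317/968025624178949679690547200000000:ℝ) * (x^2)^12 := by positivity
  have hk13 : (x^2)^13 ≤ (5/2:ℝ)^13 := pow_le_pow_left₀ hp h2 13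
  have hn13 : (-20223751/170372509855495143625536307200000:ℝ) * (5/2:ℝ)^13 ≤ (-20223751/170372509855495143625536307200000:ℝ) * (x^2)^13 := mul_le_mul_of_nonpos_left hk13 (by norm_num)
  have hp14 : (0:ℝ) ≤ (68500561/73016789938069347268086988800000000:ℝ) * (x^2)^14 := by positivity
  have hk15 : (x^2)^15 ≤ (5/2:ℝ)^15 := pow_le_pow_left₀ hp h2 15
  have hn15 : (-3251497/535456459545841879965971251200000000:ℝ) * (5/2:ℝ)^15 ≤ (-3251497/535456459545841879965971251200000000:ℝ) * (x^2)^15 := mul_le_mul_of_nonpos_left hk15 (by norm_num)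
  have hp16 : (0:ℝ) ≤ (629/20398341316032071617751285760000000:ℝ) * (x^2)^16 := by positivity
  have hk17 : (x^2)^17 ≤ (5/2:ℝ)^17 := pow_le_pow_left₀ hp h2 17
  have hn17 : (-25211/224891713009253589585707925504000000000:ℝ) * (5/2:ℝ)^17 ≤ (-25211/224891713009253589585707925504000000000:ℝ) * (x^2)^17 := mul_le_mul_of_nonpos_left hk17 (by norm_num)
  have hp18 : (0:ℝ) ≤ (3551/16192203336666258450170970636288000000000:ℝ) * (x^2)^18 := by positivity
  have hp19 : (0:ℝ) ≤ (89/420997286753322719704445236543488000000000:ℝ) * (x^2)^19 := by positivity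
  have hk20 : (x^2)^20 ≤ (5/2:ℝ)^20 := pow_le_pow_left₀ hp h2 20
  have hn20 : (-1/459269767367261148768485712592896000000000:ℝ) * (5/2:ℝ)^20 ≤ (-1/459269767367261148768485712592896000000000:ℝ) * (x^2)^20 := mul_le_mul_of_nonpos_left hk20 (by norm_num)
  linarith

lemma ls_nonneg (x : ℝ) (h1 : 0 ≤ x) (h2 : x^2 ≤ 5/2) : 0 ≤ (x - x^3/6 + x^5/120 - x^7/5040 + x^9/362880 - x^11/39916800 + x^13/6227020800 - x^15/1307674368000) := by
  have hp : (0:ℝ) ≤ x^2 := sq_nonneg x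
  have hk1 : (x^2)^1 ≤ (5/2:ℝ)^1 := pow_le_pow_left₀ hp h2 1
  have hn1 : (-1/6:ℝ) * (5/2:ℝ)^1 ≤ (-1/6:ℝ) * (x^2)^1 := mul_le_mul_of_nonpos_left hk1 (by norm_num)
  have hp2 : (0:ℝ) ≤ (1/120:ℝ) * (x^2)^2 := by positivity
  have hk3 : (x^2)^3 ≤ (5/2:ℝ)^3 := pow_le_pow_left₀ hp h2 3
  have hn3 : (-1/5040:ℝ) * (5/2:ℝ)^3 ≤ (-1/5040:ℝ) * (x^2)^3 := mul_le_mul_of_nonpos_left hk3 (by norm_num)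
  have hp4 : (0:ℝ) ≤ (1/362880:ℝ) * (x^2)^4 := by positivity
  have hk5 : (x^2)^5 ≤ (5/2:ℝ)^5 := pow_le_pow_left₀ hp h2 5
  have hn5 : (-1/39916800:ℝ) * (5/2:ℝ)^5 ≤ (-1/39916800:ℝ) * (x^2)^5 := mul_le_mul_of_nonpos_left hk5 (by norm_num)
  have hp6 : (0:ℝ) ≤ (1/6227020800:ℝ) * (x^2)^6 := by positivity
  have hk7 : (x^2)^7 ≤ (5/2:ℝ)^7 := pow_le_pow_left₀ hp h2 7
  have hn7 : (-1/1307674368000:ℝ) * (5/2:ℝ)^7 ≤ (-1/1307674368000:ℝ) * (x^2)^7 := mul_le_mul_of_nonpos_left hk7 (by norm_num)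
  have hin : (0:ℝ) < 1 - (1/6)*(x^2) + (1/120)*(x^2)^2 - (1/5040)*(x^2)^3 + (1/362880)*(x^2)^4 - (1/39916800)*(x^2)^5 + (1/6227020800)*(x^2)^6 - (1/1307674368000)*(x^2)^7 := by linarith
  have hfac : (x - x^3/6 + x^5/120 - x^7/5040 + x^9/362880 - x^11/39916800 + x^13/6227020800 - x^15/1307674368000) = x * (1 - (1/6)*(x^2) + (1/120)*(x^2)^2 - (1/5040)*(x^2)^3 + (1/362880)*(x^2)^4 - (1/39916800)*(x^2)^5 + (1/6227020800)*(x^2)^6 - (1/1307674368000)*(x^2)^7) := by ring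
  rw [hfac]
  positivity

lemma G2pos (x : ℝ) (hx : 0 < x) (h2 : x^2 ≤ 5/2)
    (hs0 : 0 ≤ Real.sin x) (hc0 : 0 ≤ Real.cos x) :
    0 < 2*x*Real.sin x + 2*(Real.sin x)^2*Real.cos x - 4*x^2*Real.cos x
      - (16/45)*x^5*Real.sin x + (16/945)*x^7*Real.sin x
      - (32/14175)*x^9*Real.sin x - (16/467775)*x^11*Real.sin x := by
  have h1 : (0:ℝ) ≤ x := hx.le
  have hsl := sin_lb15 x h1
  have hsu := sin_ub13 x h1
  have hcl := cos_lb14 x h1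
  have hcu := cos_ub16 x h1
  have hls0 : 0 ≤ (x - x^3/6 + x^5/120 - x^7/5040 + x^9/362880 - x^11/39916800 + x^13/6227020800 - x^15/1307674368000) := ls_nonneg x h1 h2
  have l2 : (x - x^3/6 + x^5/120 - x^7/5040 + x^9/362880 - x^11/39916800 + x^13/6227020800 - x^15/1307674368000)^2 ≤ (Real.sin x)^2 := pow_le_pow_left₀ hls0 hsl 2
  have m1 : x*(x - x^3/6 + x^5/120 - x^7/5040 + x^9/362880 - x^11/39916800 + x^13/6227020800 - x^15/1307674368000) ≤ x*Real.sin x := mul_le_mul_of_nonneg_left hsl h1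
  have m2 : (x - x^3/6 + x^5/120 - x^7/5040 + x^9/362880 - x^11/39916800 + x^13/6227020800 - x^15/1307674368000)^2*(1 - x^2/2 + x^4/24 - x^6/720 + x^8/40320 - x^10/3628800 + x^12/479001600 - x^14/87178291200) ≤ (Real.sin x)^2*Real.cos x := by
    nlinarith [mul_nonneg (sub_nonneg.mpr l2) hc0, mul_nonneg (pow_nonneg hls0 2) (sub_nonneg.mpr hcl)]
  have m3 : x^2*Real.cos x ≤ x^2*(1 - x^2/2 + x^4/24 - x^6/720 + x^8/40320 - x^10/3628800 + x^12/479001600 - x^14/87178291200 + x^16/20922789888000) := mul_le_mul_of_nonneg_left hcu (by positivity)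
  have m4 : x^5*Real.sin x ≤ x^5*(x - x^3/6 + x^5/120 - x^7/5040 + x^9/362880 - x^11/39916800 + x^13/6227020800) := mul_le_mul_of_nonneg_left hsu (by positivity)
  have m5 : x^7*(x - x^3/6 + x^5/120 - x^7/5040 + x^9/362880 - x^11/39916800 + x^13/6227020800 - x^15/1307674368000) ≤ x^7*Real.sin x := mul_le_mul_of_nonneg_left hsl (by positivity)
  have m6 : x^9*Real.sin x ≤ x^9*(x - x^3/6 + x^5/120 - x^7/5040 + x^9/362880 - x^11/39916800 + x^13/6227020800) := mul_le_mul_of_nonneg_left hsu (by positivity)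
  have m7 : x^11*Real.sin x ≤ x^11*(x - x^3/6 + x^5/120 - x^7/5040 + x^9/362880 - x^11/39916800 + x^13/6227020800) := mul_le_mul_of_nonneg_left hsu (by positivity)
  have hQ : 0 < x^14 * ((6368/638512875) - (1552/1915538625)*(x^2) + (34007/1120863744000)*(x^2)^2 - (1061383/1412288317440000)*(x^2)^3 + (5963/413090979840000)*(x^2)^4 - (607141/2609908810629120000)*(x^2)^5 + (4245883/1357152581527142400000)*(x^2)^6 - (6284039/171001225272419942400000)*(x^2)^7 + (3789719/10260073516345196544000000)*(x^2)^8 - (65123/20520147032690393088000000)*(x^2)^9 + (61/2632322068333461504000000)*(x^2)^10 - (80771/568818475746177696399360000000)*(x^2)^11 + (541/758424634328236928532480000000)*(x^2)^12 - (2501/887356822164037206383001600000000)*(x^2)^13 + (43/5324140932984223238298009600000000)*(x^2)^14 - (1/74537973061779125336172134400000000)*(x^2)^15) := mul_pos (pow_pos hx 14) (Qpos x h2)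
  have hkey : 2*x*(x - x^3/6 + x^5/120 - x^7/5040 + x^9/362880 - x^11/39916800 + x^13/6227020800 - x^15/1307674368000) + 2*((x - x^3/6 + x^5/120 - x^7/5040 + x^9/362880 - x^11/39916800 + x^13/6227020800 - x^15/1307674368000)^2*(1 - x^2/2 + x^4/24 - x^6/720 + x^8/40320 - x^10/3628800 + x^12/479001600 - x^14/87178291200)) - 4*(x^2*(1 - x^2/2 + x^4/24 - x^6/720 + x^8/40320 - x^10/3628800 + x^12/479001600 - x^14/87178291200 + x^16/20922789888000)) - (16/45)*(x^5*(x - x^3/6 + x^5/120 - x^7/5040 + x^9/362880 - x^11/39916800 + x^13/6227020800)) + (16/945)*(x^7*(x - x^3/6 + x^5/120 - x^7/5040 + x^9/362880 - x^11/39916800 + x^13/6227020800 - x^15/1307674368000))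
      - (32/14175)*(x^9*(x - x^3/6 + x^5/120 - x^7/5040 + x^9/362880 - x^11/39916800 + x^13/6227020800)) - (16/467775)*(x^11*(x - x^3/6 + x^5/120 - x^7/5040 + x^9/362880 - x^11/39916800 + x^13/6227020800)) = x^14 * ((6368/638512875) - (1552/1915538625)*(x^2) + (34007/1120863744000)*(x^2)^2 - (1061383/1412288317440000)*(x^2)^3 + (5963/413090979840000)*(x^2)^4 - (607141/2609908810629120000)*(x^2)^5 + (4245883/1357152581527142400000)*(x^2)^6 - (6284039/171001225272419942400000)*(x^2)^7 + (3789719/10260073516345196544000000)*(x^2)^8 - (65123/20520147032690393088000000)*(x^2)^9 + (61/2632322068333461504000000)*(x^2)^10 - (80771/568818475746177696399360000000)*(x^2)^11 + (541/758424634328236928532480000000)*(x^2)^12 - (2501/887356822164037206383001600000000)*(x^2)^13 + (43/5324140932984223238298009600000000)*(x^2)^14 - (1/74537973061779125336172134400000000)*(x^2)^15) := by ring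
  linarith

lemma Tpos (x : ℝ) (hx : 0 < x) (h2 : x^2 ≤ 5/2)
    (hs0 : 0 ≤ Real.sin x) (hc0 : 0 ≤ Real.cos x) :
    0 < -9*x*(Real.sin x)^2 - 2*x*(Real.sin x)^4 - 11*(Real.sin x)^3*Real.cos x
      + 2*x^3 + 18*x^2*(Real.sin x)*Real.cos x
      + (16/15)*x^5*(Real.sin x)^2 - (32/945)*x^7*(Real.sin x)^2
      + (32/14175)*x^9*(Real.sin x)^2 := by
  have h1 : (0:ℝ) ≤ x := hx.le
  have hsl := sin_lb15 x h1
  have hsu := sin_ub13 x h1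
  have hcl := cos_lb14 x h1
  have hcu := cos_ub16 x h1
  have hls0 : 0 ≤ (x - x^3/6 + x^5/120 - x^7/5040 + x^9/362880 - x^11/39916800 + x^13/6227020800 - x^15/1307674368000) := ls_nonneg x h1 h2
  have huc0 : (0:ℝ) ≤ (1 - x^2/2 + x^4/24 - x^6/720 + x^8/40320 - x^10/3628800 + x^12/479001600 - x^14/87178291200 + x^16/20922789888000) := le_trans hc0 hcu
  have e2 : (Real.sin x)^2 ≤ (x - x^3/6 + x^5/120 - x^7/5040 + x^9/362880 - x^11/39916800 + x^13/6227020800)^2 := pow_le_pow_left₀ hs0 hsu 2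
  have e3 : (Real.sin x)^3 ≤ (x - x^3/6 + x^5/120 - x^7/5040 + x^9/362880 - x^11/39916800 + x^13/6227020800)^3 := pow_le_pow_left₀ hs0 hsu 3
  have e4 : (Real.sin x)^4 ≤ (x - x^3/6 + x^5/120 - x^7/5040 + x^9/362880 - x^11/39916800 + x^13/6227020800)^4 := pow_le_pow_left₀ hs0 hsu 4
  have l2 : (x - x^3/6 + x^5/120 - x^7/5040 + x^9/362880 - x^11/39916800 + x^13/6227020800 - x^15/1307674368000)^2 ≤ (Real.sin x)^2 := pow_le_pow_left₀ hls0 hsl 2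
  have m1 : x*(Real.sin x)^2 ≤ x*(x - x^3/6 + x^5/120 - x^7/5040 + x^9/362880 - x^11/39916800 + x^13/6227020800)^2 := mul_le_mul_of_nonneg_left e2 h1
  have m2 : x*(Real.sin x)^4 ≤ x*(x - x^3/6 + x^5/120 - x^7/5040 + x^9/362880 - x^11/39916800 + x^13/6227020800)^4 := mul_le_mul_of_nonneg_left e4 h1
  have m3 : (Real.sin x)^3*Real.cos x ≤ (x - x^3/6 + x^5/120 - x^7/5040 + x^9/362880 - x^11/39916800 + x^13/6227020800)^3*(1 - x^2/2 + x^4/24 - x^6/720 + x^8/40320 - x^10/3628800 + x^12/479001600 - x^14/87178291200 + x^16/20922789888000) := by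
    nlinarith [mul_nonneg (pow_nonneg hs0 3) (sub_nonneg.mpr hcu), mul_nonneg (sub_nonneg.mpr e3) huc0]
  have m4 : x^2*((x - x^3/6 + x^5/120 - x^7/5040 + x^9/362880 - x^11/39916800 + x^13/6227020800 - x^15/1307674368000)*(1 - x^2/2 + x^4/24 - x^6/720 + x^8/40320 - x^10/3628800 + x^12/479001600 - x^14/87178291200)) ≤ x^2*(Real.sin x*Real.cos x) := by
    have : (x - x^3/6 + x^5/120 - x^7/5040 + x^9/362880 - x^11/39916800 + x^13/6227020800 - x^15/1307674368000)*(1 - x^2/2 + x^4/24 - x^6/720 + x^8/40320 - x^10/3628800 + x^12/479001600 - x^14/87178291200) ≤ Real.sin x*Real.cos x := by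
      nlinarith [mul_nonneg (sub_nonneg.mpr hsl) hc0, mul_nonneg hls0 (sub_nonneg.mpr hcl)]
    exact mul_le_mul_of_nonneg_left this (by positivity)
  have m5 : x^5*(x - x^3/6 + x^5/120 - x^7/5040 + x^9/362880 - x^11/39916800 + x^13/6227020800 - x^15/1307674368000)^2 ≤ x^5*(Real.sin x)^2 := mul_le_mul_of_nonneg_left l2 (by positivity)
  have m6 : x^7*(Real.sin x)^2 ≤ x^7*(x - x^3/6 + x^5/120 - x^7/5040 + x^9/362880 - x^11/39916800 + x^13/6227020800)^2 := mul_le_mul_of_nonneg_left e2 (by positivity)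
  have m7 : x^9*(x - x^3/6 + x^5/120 - x^7/5040 + x^9/362880 - x^11/39916800 + x^13/6227020800 - x^15/1307674368000)^2 ≤ x^9*(Real.sin x)^2 := mul_le_mul_of_nonneg_left l2 (by positivity)
  have hQ : 0 < x^15 * ((6368/638512875) - (1271429/784604620800)*(x^2) + (134603291/941525544960000)*(x^2)^2 - (362393533/39544072888320000)*(x^2)^3 + (265508839/579979735695360000)*(x^2)^4 - (2831631181/156594528637747200000)*(x^2)^5 + (1864067213/3257166195665141760000)*(x^2)^6 - (50507502989/3420024505448398848000000)*(x^2)^7 + (2594249831/8208058813076157235200000)*(x^2)^8 - (571673/100506842609095802880000)*(x^2)^9 + (65902011829/758424634328236928532480000000)*(x^2)^10 - (5152800241/4550547805969421571194880000000)*(x^2)^11 + (12184389317/968025624178949679690547200000000)*(x^2)^12 - (20223751/170372509855495143625536307200000)*(x^2)^13 + (68500561/73016789938069347268086988800000000)*(x^2)^14 - (3251497/535456459545841879965971251200000000)*(x^2)^15 + (629/20398341316032071617751285760000000)*(x^2)^16 - (25211/224891713009253589585707925504000000000)*(x^2)^17 + (3551/16192203336666258450170970636288000000000)*(x^2)^18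 + (89/420997286753322719704445236543488000000000)*(x^2)^19 - (1/459269767367261148768485712592896000000000)*(x^2)^20) := mul_pos (pow_pos hx 15) (Q2pos x h2)
  have hkey : -9*(x*(x - x^3/6 + x^5/120 - x^7/5040 + x^9/362880 - x^11/39916800 + x^13/6227020800)^2) - 2*(x*(x - x^3/6 + x^5/120 - x^7/5040 + x^9/362880 - x^11/39916800 + x^13/6227020800)^4) - 11*((x - x^3/6 + x^5/120 - x^7/5040 + x^9/362880 - x^11/39916800 + x^13/6227020800)^3*(1 - x^2/2 + x^4/24 - x^6/720 + x^8/40320 - x^10/3628800 + x^12/479001600 - x^14/87178291200 + x^16/20922789888000)) + 2*x^3 + 18*(x^2*((x - x^3/6 + x^5/120 - x^7/5040 + x^9/362880 - x^11/39916800 + x^13/6227020800 - x^15/1307674368000)*(1 - x^2/2 + x^4/24 - x^6/720 + x^8/40320 - x^10/3628800 + x^12/479001600 - x^14/87178291200)))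
      + (16/15)*(x^5*(x - x^3/6 + x^5/120 - x^7/5040 + x^9/362880 - x^11/39916800 + x^13/6227020800 - x^15/1307674368000)^2) - (32/945)*(x^7*(x - x^3/6 + x^5/120 - x^7/5040 + x^9/362880 - x^11/39916800 + x^13/6227020800)^2) + (32/14175)*(x^9*(x - x^3/6 + x^5/120 - x^7/5040 + x^9/362880 - x^11/39916800 + x^13/6227020800 - x^15/1307674368000)^2)
      = x^15 * ((6368/638512875) - (1271429/784604620800)*(x^2) + (134603291/941525544960000)*(x^2)^2 - (362393533/39544072888320000)*(x^2)^3 + (265508839/579979735695360000)*(x^2)^4 - (2831631181/156594528637747200000)*(x^2)^5 + (1864067213/3257166195665141760000)*(x^2)^6 - (50507502989/3420024505448398848000000)*(x^2)^7 + (2594249831/8208058813076157235200000)*(x^2)^8 - (571673/100506842609095802880000)*(x^2)^9 + (65902011829/758424634328236928532480000000)*(x^2)^10 - (5152800241/4550547805969421571194880000000)*(x^2)^11 + (12184389317/968025624178949679690547200000000)*(x^2)^12 - (20223751/170372509855495143625536307200000)*(x^2)^13 + (68500561/73016789938069347268086988800000000)*(x^2)^14 - (3251497/535456459545841879965971251200000000)*(x^2)^15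 + (629/20398341316032071617751285760000000)*(x^2)^16 - (25211/224891713009253589585707925504000000000)*(x^2)^17 + (3551/16192203336666258450170970636288000000000)*(x^2)^18 + (89/420997286753322719704445236543488000000000)*(x^2)^19 - (1/459269767367261148768485712592896000000000)*(x^2)^20) := by ring
  linarith
noncomputable def gaux : ℝ → ℝ := fun x =>
  (1/x + 2*Real.sin x*Real.cos x/(2*x^2) - 2*(Real.cos x/Real.sin x)
    - (8/45)*x^3 + (8/945)*x^5 - (16/14175)*x^7)/x^9

lemma hasDerivAt_gaux (x : ℝ) (hx : 0 < x) (hs : 0 < Real.sin x) :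
    HasDerivAt gaux
      (((-(1/x^2) + ((2*Real.cos x*Real.cos x - 2*Real.sin x*Real.sin x)*(2*x^2)
            - 2*Real.sin x*Real.cos x*(4*x))/(2*x^2)^2
          - 2*((-Real.sin x*Real.sin x - Real.cos x*Real.cos x)/(Real.sin x)^2)
          - (8/15)*x^2 + (8/189)*x^4 - (16/2025)*x^6)*x^9
        - (1/x + 2*Real.sin x*Real.cos x/(2*x^2) - 2*(Real.cos x/Real.sin x)
            - (8/45)*x^3 + (8/945)*x^5 - (16/14175)*x^7)*(9*x^8))/(x^9)^2) x := by
  have hxne : x ≠ 0 := hx.ne'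
  have hsne : Real.sin x ≠ 0 := hs.ne'
  have p1 : HasDerivAt (fun y : ℝ => 1/y) ((0*x - 1*1)/x^2) x :=
    (hasDerivAt_const x (1:ℝ)).div (hasDerivAt_id' x) hxne
  have p2num : HasDerivAt (fun y : ℝ => 2*Real.sin y*Real.cos y)
      ((2*Real.cos x)*Real.cos x + (2*Real.sin x)*(-Real.sin x)) x :=
    (((Real.hasDerivAt_sin x).const_mul 2).mul (Real.hasDerivAt_cos x))
  have p2den : HasDerivAt (fun y : ℝ => 2*y^2) (2*(2*x^(2-1))) x :=
    (hasDerivAt_pow 2 x).const_mul 2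
  have h2d : (2:ℝ)*x^2 ≠ 0 := by positivity
  have p2 := p2num.div p2den h2d
  have p3 : HasDerivAt (fun y : ℝ => Real.cos y/Real.sin y)
      (((-Real.sin x)*Real.sin x - Real.cos x*Real.cos x)/(Real.sin x)^2) x :=
    (Real.hasDerivAt_cos x).div (Real.hasDerivAt_sin x) hsne
  have p4 : HasDerivAt (fun y : ℝ => y^3) ((3:ℕ)*x^(3-1)) x := hasDerivAt_pow 3 x
  have p5 : HasDerivAt (fun y : ℝ => y^5) ((5:ℕ)*x^(5-1)) x := hasDerivAt_pow 5 x
  have p6 : HasDerivAt (fun y : ℝ => y^7) ((7:ℕ)*x^(7-1)) x := hasDerivAt_pow 7 x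
  have hnum := ((((p1.add p2).sub (p3.const_mul 2)).sub ((p4.const_mul (8/45)))).add
      (p5.const_mul (8/945))).sub (p6.const_mul (16/14175))
  have hden : HasDerivAt (fun y : ℝ => y^9) ((9:ℕ)*x^(9-1)) x := hasDerivAt_pow 9 x
  have h9 : x^9 ≠ 0 := pow_ne_zero 9 hxne
  have H := hnum.div hden h9
  refine H.congr_deriv ?_
  simp only [Pi.add_apply, Pi.sub_apply, Pi.div_apply]
  push_cast
  field_simp
  ring

lemma sin_pos_of_Ioc (x : ℝ) (hx : x ∈ Set.Ioc 0 (π/2)) : 0 < Real.sin x := by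
  have hp := Real.pi_pos
  exact Real.sin_pos_of_pos_of_lt_pi hx.1 (by linarith [hx.2])

lemma gaux_mono : StrictMonoOn gaux (Set.Ioc 0 (π/2)) := by
  apply strictMonoOn_of_deriv_pos (convex_Ioc 0 (π/2))
  · intro x hx
    exact ((hasDerivAt_gaux x hx.1 (sin_pos_of_Ioc x hx)).differentiableAt).continuousAt.continuousWithinAt
  · intro x hx
    rw [interior_Ioc] at hx
    obtain ⟨hx0, hxu⟩ := hx
    have hs : 0 < Real.sin x := sin_pos_of_Ioc x ⟨hx0, hxu.le⟩
    have hc0 : 0 ≤ Real.cos x := by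
      have hp := Real.pi_pos
      exact Real.cos_nonneg_of_mem_Icc ⟨by linarith, hxu.le⟩
    have h2 : x^2 ≤ 5/2 := by nlinarith [Real.pi_lt_d2, Real.pi_gt_three]
    rw [(hasDerivAt_gaux x hx0 hs).deriv]
    set s := Real.sin x with hsdef
    set c := Real.cos x with hcdef
    set D : ℝ := -(1/x^2) + ((2*c*c - 2*s*s)*(2*x^2) - 2*s*c*(4*x))/(2*x^2)^2
        - 2*((-s*s - c*c)/s^2) - (8/15)*x^2 + (8/189)*x^4 - (16/2025)*x^6 with hD
    set N : ℝ := 1/x + 2*s*c/(2*x^2) - 2*(c/s) - (8/45)*x^3 + (8/945)*x^5 - (16/14175)*x^7 with hN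
    have hT := Tpos x hx0 h2 hs.le hc0
    rw [← hsdef, ← hcdef] at hT
    have pyth : s^2 + c^2 = 1 := by rw [hsdef, hcdef]; exact Real.sin_sq_add_cos_sq x
    have key1 : (D*x - 9*N)*(x^2*s^2) =
        x*s^2*c^2 - x*s^4 - 10*x*s^2 - 11*s^3*c + 2*x^3*s^2 + 2*x^3*c^2 + 18*x^2*s*c
          + ((16/15)*x^5 - (32/945)*x^7 + (32/14175)*x^9)*s^2 := by
      rw [hD, hN]
      field_simp
      ring
    have key2 : x*s^2*c^2 - x*s^4 - 10*x*s^2 - 11*s^3*c + 2*x^3*s^2 + 2*x^3*c^2 + 18*x^2*s*c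
          + ((16/15)*x^5 - (32/945)*x^7 + (32/14175)*x^9)*s^2
        = -9*x*s^2 - 2*x*s^4 - 11*s^3*c + 2*x^3 + 18*x^2*s*c
          + (16/15)*x^5*s^2 - (32/945)*x^7*s^2 + (32/14175)*x^9*s^2 := by
      linear_combination (x*s^2 + 2*x^3) * pyth
    have hDN : 0 < D*x - 9*N := by
      have hxs : (0:ℝ) < x^2*s^2 := by positivity
      have h5 : 0 < (D*x - 9*N)*(x^2*s^2) := by rw [key1, key2]; exact hT
      rcases mul_pos_iff.mp h5 with ⟨h,_⟩|⟨_,h⟩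
      · exact h
      · linarith
    have hnum : 0 < D*x^9 - N*(9*x^8) := by
      have e : D*x^9 - N*(9*x^8) = x^8*(D*x - 9*N) := by ring
      rw [e]
      exact mul_pos (by positivity) hDN
    exact div_pos hnum (by positivity)

theorem wilker_m4 (x : ℝ) (hx : x ∈ Set.Ioo 0 (π / 2)) :
    (16 / 14175) * x ^ 7 + (8 / 467775) * x ^ 9
      < 1 / x + Real.sin (2 * x) / (2 * x ^ 2) - 2 * Real.cot x
          - (8 / 45) * x ^ 3 + (8 / 945) * x ^ 5 ∧
    1 / x + Real.sin (2 * x) / (2 * x ^ 2) - 2 * Real.cot x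
        - (8 / 45) * x ^ 3 + (8 / 945) * x ^ 5
      < (16 / 14175) * x ^ 7
        + (2 / π) ^ 9 * (2 / π - π ^ 3 / 45 + π ^ 5 / 3780 - π ^ 7 / 113400) * x ^ 9 := by
  obtain ⟨hx0, hxu⟩ := hx
  have hp := Real.pi_pos
  have hs : 0 < Real.sin x := Real.sin_pos_of_pos_of_lt_pi hx0 (by linarith)
  have hc0 : 0 ≤ Real.cos x := Real.cos_nonneg_of_mem_Icc ⟨by linarith, hxu.le⟩
  have h2 : x^2 ≤ 5/2 := by nlinarith [Real.pi_lt_d2, Real.pi_gt_three]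
  rw [Real.cot_eq_cos_div_sin, Real.sin_two_mul]
  constructor
  · -- lower bound
    have hG := G2pos x hx0 h2 hs.le hc0
    have key : (1/x + 2*Real.sin x*Real.cos x/(2*x^2) - 2*(Real.cos x/Real.sin x)
          - (8/45)*x^3 + (8/945)*x^5
          - ((16/14175)*x^7 + (8/467775)*x^9)) * (2*x^2*Real.sin x)
        = 2*x*Real.sin x + 2*(Real.sin x)^2*Real.cos x - 4*x^2*Real.cos x
          - (16/45)*x^5*Real.sin x + (16/945)*x^7*Real.sin x
          - (32/14175)*x^9*Real.sin x - (16/467775)*x^11*Real.sin x := by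
      field_simp
      ring
    have hden : (0:ℝ) < 2*x^2*Real.sin x := by positivity
    have hpos : 0 < 1/x + 2*Real.sin x*Real.cos x/(2*x^2) - 2*(Real.cos x/Real.sin x)
        - (8/45)*x^3 + (8/945)*x^5 - ((16/14175)*x^7 + (8/467775)*x^9) := by
      by_contra hcon
      push_neg at hcon
      nlinarith [key, hG, mul_nonneg (neg_nonneg.mpr hcon) hden.le]
    have e : 2*Real.sin x*Real.cos x = Real.sin x * Real.cos x * 2 := by ring
    nlinarith [hpos]
  · -- upper bound
    have hmem1 : x ∈ Set.Ioc 0 (π/2) := ⟨hx0, hxu.le⟩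
    have hmem2 : π/2 ∈ Set.Ioc 0 (π/2) := ⟨by linarith, le_refl _⟩
    have hlt := gaux_mono hmem1 hmem2 hxu
    unfold gaux at hlt
    rw [Real.sin_pi_div_two, Real.cos_pi_div_two] at hlt
    have hNpi : (1/(π/2) + 2*1*0/(2*(π/2)^2) - 2*(0/1) - (8/45)*(π/2)^3 + (8/945)*(π/2)^5
          - (16/14175)*(π/2)^7)/(π/2)^9
        = (2/π)^9 * (2/π - π^3/45 + π^5/3780 - π^7/113400) := by
      have hpne : π ≠ 0 := hp.ne'
      field_simp
      ring
    rw [hNpi] at hlt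
    rw [div_lt_iff₀ (by positivity : (0:ℝ) < x^9)] at hlt
    nlinarith [hlt]
end

section
/- For every x ∈ (0,1): x⁵/180 + x⁷/189 < arcsin x − 3x/(2+√(1−x²)) < x⁵/180 + (−271/180 + π/2)·x⁷. -/
open Real

noncomputable def fS (x : ℝ) : ℝ := Real.arcsin x - 3 * x / (2 + Real.sqrt (1 - x ^ 2))

noncomputable def fS' (x : ℝ) : ℝ :=
  (1 - Real.sqrt (1 - x ^ 2)) ^ 2 /
    (Real.sqrt (1 - x ^ 2) * (2 + Real.sqrt (1 - x ^ 2)) ^ 2)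

noncomputable def GG (x : ℝ) : ℝ := x ^ 5 / 180 + (-(271 / 180) + π / 2) * x ^ 7 - fS x

noncomputable def GG' (x : ℝ) : ℝ := x ^ 4 / 36 + 7 * (-(271 / 180) + π / 2) * x ^ 6 - fS' x

lemma hden (x : ℝ) : (2 : ℝ) + Real.sqrt (1 - x ^ 2) ≠ 0 := by
  have := Real.sqrt_nonneg (1 - x ^ 2); positivity

lemma contfS : Continuous fS := by
  unfold fS
  exact Real.continuous_arcsin.sub ((continuous_const.mul continuous_id).div
    (continuous_const.add (Real.continuous_sqrt.comp (by continuity))) hden)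

lemma contGG : Continuous GG := by
  unfold GG
  exact (((continuous_pow 5).div_const 180).add
    (continuous_const.mul (continuous_pow 7))).sub contfS

lemma fS_deriv (x : ℝ) (hx : x ∈ Set.Ioo (0:ℝ) 1) : HasDerivAt fS (fS' x) x := by
  obtain ⟨hx0, hx1⟩ := hx
  unfold fS fS'
  set s := Real.sqrt (1 - x ^ 2) with hsdef
  have h1x : (0:ℝ) < 1 - x ^ 2 := by nlinarith
  have hs2 : s ^ 2 = 1 - x ^ 2 := Real.sq_sqrt h1x.le
  have hs0 : 0 < s := Real.sqrt_pos.2 h1x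
  have h1 : HasDerivAt Real.arcsin (1 / s) x :=
    Real.hasDerivAt_arcsin (by linarith) (by linarith)
  have h2 : HasDerivAt (fun y : ℝ => 1 - y ^ 2) (-(2 * x)) x := by
    simpa using ((hasDerivAt_pow 2 x).const_sub 1)
  have h3 : HasDerivAt (fun y : ℝ => 2 + Real.sqrt (1 - y ^ 2))
      (-(2 * x) / (2 * s)) x := (h2.sqrt (by positivity)).const_add 2
  have h5 : HasDerivAt (fun y : ℝ => 3 * y) 3 x := by
    simpa using (hasDerivAt_id x).const_mul 3
  have h6 := h5.div h3 (hden x)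
  have h7 := h1.sub h6
  refine (h7.congr_deriv ?_)
  symm
  rw [← hsdef]
  have hne : (2:ℝ) + s ≠ 0 := by positivity
  field_simp
  linear_combination 3 * hs2

lemma GG_deriv (x : ℝ) (hx : x ∈ Set.Ioo (0:ℝ) 1) : HasDerivAt GG (GG' x) x := by
  have hp : HasDerivAt (fun y : ℝ => y ^ 5 / 180 + (-(271 / 180) + π / 2) * y ^ 7)
      (x ^ 4 / 36 + 7 * (-(271 / 180) + π / 2) * x ^ 6) x := by
    have := ((hasDerivAt_pow 5 x).div_const 180).add
      (((hasDerivAt_pow 7 x)).const_mul (-(271 / 180) + π / 2))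
    refine this.congr_deriv ?_
    norm_num; ring
  have := hp.sub (fS_deriv x hx)
  exact this

lemma FF_deriv (x : ℝ) (hx : x ∈ Set.Ioo (0:ℝ) 1) :
    HasDerivAt (fun y => fS y - y ^ 5 / 180 - y ^ 7 / 189)
      (fS' x - x ^ 4 / 36 - x ^ 6 / 27) x := by
  have hp : HasDerivAt (fun y : ℝ => y ^ 5 / 180 + y ^ 7 / 189)
      (x ^ 4 / 36 + x ^ 6 / 27) x := by
    have := ((hasDerivAt_pow 5 x).div_const 180).add ((hasDerivAt_pow 7 x).div_const 189)
    refine this.congr_deriv ?_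
    norm_num; ring
  have := (fS_deriv x hx).sub hp
  convert this using 1
  · rfl
  · rfl
  · ext y; simp only [Pi.sub_apply]; ring
  · ring

lemma polyU1 (s : ℝ) (hge : 26780802/10^8 ≤ s) (h1 : s < 1) :
    1 < s * (1 + s) ^ 2 * (2 + s) ^ 2 *
      (1/36 + 7 * (3141592/2000000 - 271/180) * (1 - s ^ 2)) := by
  have h1s : (0:ℝ) < 1 - s := by linarith
  have ht : (0:ℝ) ≤ s - 26780802/10^8 := by linarith
  nlinarith [mul_pos h1s (show (0:ℝ) < 1 by norm_num),
    mul_nonneg h1s.le ht,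
    mul_nonneg h1s.le (pow_nonneg ht 2),
    mul_nonneg h1s.le (pow_nonneg ht 3),
    mul_nonneg h1s.le (pow_nonneg ht 4),
    mul_nonneg h1s.le (pow_nonneg ht 5),
    mul_nonneg h1s.le (pow_nonneg ht 6)]

lemma polyU2 (s : ℝ) (h0 : 0 < s) (hle : s ≤ 26780674/10^8) :
    s * (1 + s) ^ 2 * (2 + s) ^ 2 *
      (1/36 + 7 * (3141593/2000000 - 271/180) * (1 - s ^ 2)) < 1 := by
  have h1s : (0:ℝ) < 1 - s := by linarith
  have hR : -1 + 4220359/4500000 * s + 7595359/1125000 * s^2 + 2693453/240000 * s^3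
      + 51895607/6000000 * s^4 + 57542513/18000000 * s^5 + 8220359/18000000 * s^6 < 0 := by
    nlinarith [pow_le_pow_left₀ h0.le hle 2, pow_le_pow_left₀ h0.le hle 3,
      pow_le_pow_left₀ h0.le hle 4, pow_le_pow_left₀ h0.le hle 5,
      pow_le_pow_left₀ h0.le hle 6]
  nlinarith [mul_pos h1s (neg_pos.2 hR)]

lemma polyL (s : ℝ) (h0 : 0 < s) (h1 : s < 1) :
    s * (1 + s) ^ 2 * (2 + s) ^ 2 * (7 - 4 * s ^ 2) < 108 := by
  nlinarith [pow_pos (show (0:ℝ) < 1 - s by linarith) 2,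
    mul_nonneg (sq_nonneg (1 - s)) h0.le,
    mul_nonneg (sq_nonneg (1 - s)) (pow_nonneg h0.le 2),
    mul_nonneg (sq_nonneg (1 - s)) (pow_nonneg h0.le 3),
    mul_nonneg (sq_nonneg (1 - s)) (pow_nonneg h0.le 4),
    mul_nonneg (sq_nonneg (1 - s)) (pow_nonneg h0.le 5)]

section signs
variable (y : ℝ)

lemma sfacts (hy0 : 0 < y) (hy1 : y < 1) :
    0 < Real.sqrt (1 - y ^ 2) ∧ Real.sqrt (1 - y ^ 2) < 1 ∧
      Real.sqrt (1 - y ^ 2) ^ 2 = 1 - y ^ 2 := by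
  have h1y : (0:ℝ) < 1 - y ^ 2 := by nlinarith
  have hs2 : Real.sqrt (1 - y ^ 2) ^ 2 = 1 - y ^ 2 := Real.sq_sqrt h1y.le
  have hs0 : 0 < Real.sqrt (1 - y ^ 2) := Real.sqrt_pos.2 h1y
  exact ⟨hs0, by nlinarith, hs2⟩

lemma FFd_pos (hy0 : 0 < y) (hy1 : y < 1) : 0 < fS' y - y ^ 4 / 36 - y ^ 6 / 27 := by
  obtain ⟨hs0, hs1, hs2⟩ := sfacts y hy0 hy1
  set s := Real.sqrt (1 - y ^ 2)
  have hy2 : y ^ 2 = 1 - s ^ 2 := by linarith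
  have hy4 : y ^ 4 = (1 - s ^ 2) ^ 2 := by rw [show y^4 = (y^2)^2 by ring, hy2]
  have hy6 : y ^ 6 = (1 - s ^ 2) ^ 3 := by rw [show y^6 = (y^2)^3 by ring, hy2]
  have key := polyL s hs0 hs1
  have h2pos : (0:ℝ) < (1 - s) ^ 2 := pow_pos (by linarith) 2
  have hlt : y ^ 4 / 36 + y ^ 6 / 27 < (1 - s) ^ 2 / (s * (2 + s) ^ 2) := by
    rw [lt_div_iff₀ (by positivity)]
    nlinarith [mul_lt_mul_of_pos_left key h2pos, hy4, hy6]
  have : fS' y = (1 - s) ^ 2 / (s * (2 + s) ^ 2) := rfl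
  rw [this]; linarith

lemma GGd_pos (hy0 : 0 < y) (hy1 : y < 1)
    (hge : 26780802/10^8 ≤ Real.sqrt (1 - y ^ 2)) : 0 < GG' y := by
  obtain ⟨hs0, hs1, hs2⟩ := sfacts y hy0 hy1
  set s := Real.sqrt (1 - y ^ 2)
  have hy2 : y ^ 2 = 1 - s ^ 2 := by linarith
  have hy4 : y ^ 4 = (1 - s ^ 2) ^ 2 := by rw [show y^4 = (y^2)^2 by ring, hy2]
  have hy6 : y ^ 6 = (1 - s ^ 2) ^ 3 := by rw [show y^6 = (y^2)^3 by ring, hy2]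
  have h2pos : (0:ℝ) < (1 - s) ^ 2 := pow_pos (by linarith) 2
  have hpi := Real.pi_gt_d6
  have hc : (3141592/2000000 : ℝ) - 271/180 ≤ -(271/180) + π/2 := by linarith
  have hdpos : (0:ℝ) < s * (1 + s) ^ 2 * (2 + s) ^ 2 := by positivity
  have h1ms2 : (0:ℝ) ≤ 1 - s ^ 2 := by nlinarith
  have key2 : 1 < s * (1 + s) ^ 2 * (2 + s) ^ 2 *
      (1/36 + 7 * (-(271/180) + π/2) * (1 - s ^ 2)) := by
    refine lt_of_lt_of_le (polyU1 s hge hs1) ?_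
    nlinarith [mul_nonneg (mul_nonneg hdpos.le h1ms2) (sub_nonneg.2 hc)]
  have hlt : (1 - s) ^ 2 / (s * (2 + s) ^ 2)
      < y ^ 4 / 36 + 7 * (-(271/180) + π/2) * y ^ 6 := by
    rw [div_lt_iff₀ (by positivity), hy4, hy6]
    nlinarith [mul_lt_mul_of_pos_left key2 h2pos]
  have hfs : fS' y = (1 - s) ^ 2 / (s * (2 + s) ^ 2) := rfl
  unfold GG'
  rw [hfs]; linarith

lemma GGd_neg (hy0 : 0 < y) (hy1 : y < 1)
    (hle : Real.sqrt (1 - y ^ 2) ≤ 26780674/10^8) : GG' y < 0 := by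
  obtain ⟨hs0, hs1, hs2⟩ := sfacts y hy0 hy1
  set s := Real.sqrt (1 - y ^ 2)
  have hy2 : y ^ 2 = 1 - s ^ 2 := by linarith
  have hy4 : y ^ 4 = (1 - s ^ 2) ^ 2 := by rw [show y^4 = (y^2)^2 by ring, hy2]
  have hy6 : y ^ 6 = (1 - s ^ 2) ^ 3 := by rw [show y^6 = (y^2)^3 by ring, hy2]
  have h2pos : (0:ℝ) < (1 - s) ^ 2 := pow_pos (by linarith) 2
  have hpi := Real.pi_lt_d6
  have hc : -(271/180) + π/2 ≤ (3141593/2000000 : ℝ) - 271/180 := by linarith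
  have hdpos : (0:ℝ) < s * (1 + s) ^ 2 * (2 + s) ^ 2 := by positivity
  have h1ms2 : (0:ℝ) ≤ 1 - s ^ 2 := by nlinarith
  have key2 : s * (1 + s) ^ 2 * (2 + s) ^ 2 *
      (1/36 + 7 * (-(271/180) + π/2) * (1 - s ^ 2)) < 1 := by
    refine lt_of_le_of_lt ?_ (polyU2 s hs0 hle)
    nlinarith [mul_nonneg (mul_nonneg hdpos.le h1ms2) (sub_nonneg.2 hc)]
  have hlt : y ^ 4 / 36 + 7 * (-(271/180) + π/2) * y ^ 6
      < (1 - s) ^ 2 / (s * (2 + s) ^ 2) := by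
    rw [lt_div_iff₀ (by positivity), hy4, hy6]
    nlinarith [mul_lt_mul_of_pos_left key2 h2pos]
  have hfs : fS' y = (1 - s) ^ 2 / (s * (2 + s) ^ 2) := rfl
  unfold GG'
  rw [hfs]; linarith

lemma GGd_ge (hy0 : 0 < y) (hy1 : y < 1)
    (hs : 1/4 ≤ Real.sqrt (1 - y ^ 2)) : -1 ≤ GG' y := by
  obtain ⟨hs0, hs1, hs2⟩ := sfacts y hy0 hy1
  set s := Real.sqrt (1 - y ^ 2)
  have hpi := Real.pi_gt_d6
  have hfle : (1 - s) ^ 2 / (s * (2 + s) ^ 2) ≤ 1 := by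
    rw [div_le_one (by positivity)]
    nlinarith
  have hpoly : (0:ℝ) ≤ y ^ 4 / 36 + 7 * (-(271/180) + π/2) * y ^ 6 := by
    have : (0:ℝ) ≤ 7 * (-(271/180) + π/2) := by linarith
    positivity
  have hfs : fS' y = (1 - s) ^ 2 / (s * (2 + s) ^ 2) := rfl
  unfold GG'
  rw [hfs]; linarith

lemma GGd_m (hy0 : 1/2 ≤ y) (hy1 : y ≤ 3/5) : 1/500 ≤ GG' y := by
  obtain ⟨hs0, hs1, hs2⟩ := sfacts y (by linarith) (by linarith)
  set s := Real.sqrt (1 - y ^ 2)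
  have hpi := Real.pi_gt_d6
  have hsge : (4/5 : ℝ) ≤ s := by nlinarith
  have hfle : (1 - s) ^ 2 / (s * (2 + s) ^ 2) ≤ 1/150 := by
    rw [div_le_iff₀ (by positivity)]
    nlinarith
  have hp1 : (1/16 : ℝ) ≤ y ^ 4 := by
    calc (1/16 : ℝ) = (1/2)^4 := by norm_num
    _ ≤ y ^ 4 := pow_le_pow_left₀ (by norm_num) hy0 4
  have hp2 : (1/64 : ℝ) ≤ y ^ 6 := by
    calc (1/64 : ℝ) = (1/2)^6 := by norm_num
    _ ≤ y ^ 6 := pow_le_pow_left₀ (by norm_num) hy0 6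
  have hcpos : (0:ℝ) ≤ 7 * (-(271/180) + π/2) := by linarith
  have hfs : fS' y = (1 - s) ^ 2 / (s * (2 + s) ^ 2) := rfl
  unfold GG'
  rw [hfs]
  have h7c : (456/1000 : ℝ) ≤ 7 * (-(271/180) + π/2) := by linarith
  have := mul_le_mul h7c hp2 (by norm_num : (0:ℝ) ≤ 1/64) (by linarith)
  linarith

end signs


lemma GG0 : GG 0 = 0 := by
  simp [GG, fS]

lemma GG1 : GG 1 = 0 := by
  have h : (1:ℝ) - 1 ^ 2 = 0 := by norm_num
  simp only [GG, fS, h, Real.sqrt_zero, Real.arcsin_one]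
  ring

lemma mono1 : StrictMonoOn GG (Set.Icc 0 (Real.sqrt (1 - (26780802/10^8:ℝ)^2))) := by
  have hx1sq : (Real.sqrt (1 - (26780802/10^8:ℝ)^2))^2 = 1 - (26780802/10^8:ℝ)^2 :=
    Real.sq_sqrt (by norm_num)
  apply strictMonoOn_of_deriv_pos (convex_Icc _ _) contGG.continuousOn
  intro y hy
  rw [interior_Icc] at hy
  have hx1nn := Real.sqrt_nonneg (1 - (26780802/10^8:ℝ)^2)
  have hy1 : y < 1 := by nlinarith [hy.2, hy.1]
  rw [(GG_deriv y ⟨hy.1, hy1⟩).deriv]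
  apply GGd_pos y hy.1 hy1
  rw [Real.le_sqrt' (by norm_num)]
  nlinarith [hy.2, hy.1]

lemma anti1 : StrictAntiOn GG (Set.Icc (Real.sqrt (1 - (26780674/10^8:ℝ)^2)) 1) := by
  have hx2sq : (Real.sqrt (1 - (26780674/10^8:ℝ)^2))^2 = 1 - (26780674/10^8:ℝ)^2 :=
    Real.sq_sqrt (by norm_num)
  apply strictAntiOn_of_deriv_neg (convex_Icc _ _) contGG.continuousOn
  intro y hy
  rw [interior_Icc] at hy
  have hx2nn := Real.sqrt_nonneg (1 - (26780674/10^8:ℝ)^2)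
  have hy0 : 0 < y := by nlinarith [hy.1]
  rw [(GG_deriv y ⟨hy0, hy.2⟩).deriv]
  apply GGd_neg y hy0 hy.2
  have h1 : 1 - y^2 ≤ ((26780674/10^8:ℝ))^2 := by nlinarith [hy.1]
  calc Real.sqrt (1 - y^2) ≤ Real.sqrt ((26780674/10^8:ℝ)^2) := Real.sqrt_le_sqrt h1
  _ = 26780674/10^8 := Real.sqrt_sq (by norm_num)

theorem shafer3_n3 (x : ℝ) (hx : x ∈ Set.Ioo (0 : ℝ) 1) :
    x ^ 5 / 180 + x ^ 7 / 189
      < Real.arcsin x - 3 * x / (2 + Real.sqrt (1 - x ^ 2)) ∧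
    Real.arcsin x - 3 * x / (2 + Real.sqrt (1 - x ^ 2))
      < x ^ 5 / 180 + (-(271 / 180) + π / 2) * x ^ 7 := by
  obtain ⟨hx0, hx1⟩ := hx
  constructor
  · -- lower bound
    have contF : Continuous (fun y : ℝ => fS y - y ^ 5 / 180 - y ^ 7 / 189) := by
      exact (contfS.sub ((continuous_pow 5).div_const 180)).sub
        ((continuous_pow 7).div_const 189)
    have monoF : StrictMonoOn (fun y : ℝ => fS y - y ^ 5 / 180 - y ^ 7 / 189)
        (Set.Icc 0 1) := by
      apply strictMonoOn_of_deriv_pos (convex_Icc _ _) contF.continuousOn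
      intro y hy
      rw [interior_Icc] at hy
      rw [(FF_deriv y hy).deriv]
      exact FFd_pos y hy.1 hy.2
    have h0 : fS 0 - (0:ℝ) ^ 5 / 180 - (0:ℝ) ^ 7 / 189 = 0 := by simp [fS]
    have := monoF (Set.mem_Icc.2 ⟨le_refl 0, by norm_num⟩)
      (Set.mem_Icc.2 ⟨hx0.le, hx1.le⟩) hx0
    simp only at this
    have hfsx : fS x = Real.arcsin x - 3 * x / (2 + Real.sqrt (1 - x ^ 2)) := rfl
    rw [h0] at this
    linarith [this]
  · -- upper bound
    have hGpos : 0 < GG x := by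
      set x1 := Real.sqrt (1 - (26780802/10^8:ℝ)^2) with hx1def
      set x2 := Real.sqrt (1 - (26780674/10^8:ℝ)^2) with hx2def
      have hx1sq : x1^2 = 1 - (26780802/10^8:ℝ)^2 := Real.sq_sqrt (by norm_num)
      have hx2sq : x2^2 = 1 - (26780674/10^8:ℝ)^2 := Real.sq_sqrt (by norm_num)
      have hx1nn : 0 ≤ x1 := Real.sqrt_nonneg _
      have hx2nn : 0 ≤ x2 := Real.sqrt_nonneg _
      have hx1ge : (9/10:ℝ) ≤ x1 := by nlinarith
      have hx2ge : (9/10:ℝ) ≤ x2 := by nlinarith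
      have hx1lt1 : x1 < 1 := by nlinarith
      have hx2lt1 : x2 < 1 := by nlinarith
      have hx12 : x1 < x2 := by nlinarith
      have hgap : x2 - x1 ≤ 7/10^7 := by nlinarith
      rcases le_or_gt x x1 with hle | hgt
      · have := mono1 (Set.mem_Icc.2 ⟨le_refl 0, hx1nn⟩)
          (Set.mem_Icc.2 ⟨hx0.le, hle⟩) hx0
        rw [GG0] at this; exact this
      rcases le_or_gt x2 x with hge | hlt
      · have := anti1 (Set.mem_Icc.2 ⟨hge, hx1.le⟩)
          (Set.mem_Icc.2 ⟨le_of_lt (lt_of_le_of_lt hge hx1), le_refl 1⟩) hx1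
        rw [GG1] at this; exact this
      -- middle region
      have hG12 : 0 < GG (1/2) := by
        have h12 : GG 0 < GG (1/2) := mono1 (Set.mem_Icc.2 ⟨le_refl 0, hx1nn⟩)
          (Set.mem_Icc.2 ⟨by norm_num, by linarith⟩) (by norm_num)
        rw [GG0] at h12; exact h12
      have hG35 : 1/5000 < GG (3/5) := by
        obtain ⟨ξ, hξ, heq⟩ := exists_hasDerivAt_eq_slope GG GG'
          (by norm_num : (1/2:ℝ) < 3/5) contGG.continuousOn
          (fun ξ hξ => GG_deriv ξ ⟨by linarith [hξ.1], by linarith [hξ.2]⟩)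
        have hd := GGd_m ξ hξ.1.le hξ.2.le
        have h10 : (3/5:ℝ) - 1/2 = 1/10 := by norm_num
        rw [h10] at heq
        have : GG (3/5) - GG (1/2) = GG' ξ * (1/10) := by
          field_simp at heq ⊢; linarith
        linarith
      have hGx1 : GG (3/5) < GG x1 := by
        apply mono1 (Set.mem_Icc.2 ⟨by norm_num, by linarith⟩)
          (Set.mem_Icc.2 ⟨hx1nn, le_refl x1⟩) (by linarith)
      have hder : ∀ η ∈ Set.Ioo x1 x, HasDerivAt GG (GG' η) η := by
        intro η hη
        exact GG_deriv η ⟨by linarith [hη.1], by linarith [hη.2]⟩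
      obtain ⟨η, hη, heq2⟩ := exists_hasDerivAt_eq_slope GG GG' hgt
        contGG.continuousOn hder
      have hη0 : 0 < η := by linarith [hη.1]
      have hη1 : η < 1 := by linarith [hη.2]
      have hdge : -1 ≤ GG' η := by
        apply GGd_ge η hη0 hη1
        rw [Real.le_sqrt' (by norm_num)]
        nlinarith [hη.2]
      have hxx1 : 0 < x - x1 := by linarith
      have hslope : GG x - GG x1 = GG' η * (x - x1) := by
        field_simp at heq2; linarith
      have hmul : (-1) * (x - x1) ≤ GG' η * (x - x1) :=
        mul_le_mul_of_nonneg_right hdge hxx1.le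
      have hgap2 : x - x1 ≤ 7/10^7 := by linarith
      linarith
    have hfsx : fS x = Real.arcsin x - 3 * x / (2 + Real.sqrt (1 - x ^ 2)) := rfl
    unfold GG at hGpos
    rw [hfsx] at hGpos
    linarith
end

section
/- For every x ∈ (0,1): x⁵/180 + x⁷/189 + 23x⁹/5184 < arcsin x − 3x/(2+√(1−x²)) < x⁵/180 + x⁷/189 + (−5711/3780 + π/2)·x⁹. -/
open Real

noncomputable def sAux (x : ℝ) : ℝ := Real.sqrt (1 - x ^ 2)
noncomputable def FF (x : ℝ) : ℝ := Real.arcsin x - 3 * x / (2 + sAux x)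
noncomputable def D1 (x : ℝ) : ℝ := (1 - sAux x) ^ 2 / (sAux x * (2 + sAux x) ^ 2)
noncomputable def D2 (x : ℝ) : ℝ :=
  x * (1 - sAux x) * (2 + 5 * sAux x - sAux x ^ 2) / (sAux x ^ 3 * (2 + sAux x) ^ 3)

lemma sAux_sq {x : ℝ} (h : x ∈ Set.Icc (-1:ℝ) 1) : sAux x ^ 2 = 1 - x ^ 2 := by
  have : (0:ℝ) ≤ 1 - x ^ 2 := by nlinarith [h.1, h.2]
  simpa [sAux] using Real.sq_sqrt this

lemma sAux_pos {x : ℝ} (h : x ∈ Set.Ioo (-1:ℝ) 1) : 0 < sAux x := by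
  apply Real.sqrt_pos.2; nlinarith [h.1, h.2]

lemma sAux_nonneg (x : ℝ) : 0 ≤ sAux x := Real.sqrt_nonneg _

lemma sAux_lt_one {x : ℝ} (hx : x ≠ 0) : sAux x < 1 := by
  have h2 : (0:ℝ) < x ^ 2 := by positivity
  have := (Real.sqrt_lt' (y := 1) one_pos).2 (show (1:ℝ) - x^2 < 1 ^ 2 by nlinarith)
  simpa [sAux] using this

lemma hasDerivAt_sAux {x : ℝ} (h : x ∈ Set.Ioo (-1:ℝ) 1) :
    HasDerivAt sAux (-x / sAux x) x := by
  have hne : (1 : ℝ) - x ^ 2 ≠ 0 := by nlinarith [h.1, h.2]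
  have h1 : HasDerivAt (fun y : ℝ => 1 - y ^ 2) (-(2*x)) x := by
    simpa using ((hasDerivAt_pow 2 x).const_sub 1)
  have := h1.sqrt hne
  refine this.congr_deriv ?_
  have hs := sAux_pos h
  rw [show Real.sqrt (1 - x ^ 2) = sAux x from rfl, div_eq_div_iff (mul_pos two_pos hs).ne' hs.ne']
  ring

lemma hasDerivAt_FF {x : ℝ} (h : x ∈ Set.Ioo (-1:ℝ) 1) :
    HasDerivAt FF (D1 x) x := by
  have hs := sAux_pos h
  have hs2 := sAux_sq (Set.mem_Icc.2 ⟨le_of_lt h.1, le_of_lt h.2⟩)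
  have hsd : (2:ℝ) + sAux x ≠ 0 := by positivity
  have ha : HasDerivAt Real.arcsin (1 / Real.sqrt (1 - x ^ 2)) x :=
    Real.hasDerivAt_arcsin (ne_of_gt h.1) (ne_of_lt h.2)
  have hnum : HasDerivAt (fun y : ℝ => 3 * y) 3 x := by
    simpa using (hasDerivAt_id x).const_mul 3
  have hden : HasDerivAt (fun y : ℝ => 2 + sAux y) (-x / sAux x) x :=
    (hasDerivAt_sAux h).const_add 2
  have hq := hnum.div hden hsd
  have := ha.sub hq
  refine this.congr_deriv ?_
  rw [show Real.sqrt (1 - x ^ 2) = sAux x from rfl]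
  rw [D1]
  field_simp
  nlinarith [hs, hs2, sq_nonneg (sAux x)]

lemma hasDerivAt_D1 {x : ℝ} (h : x ∈ Set.Ioo (-1:ℝ) 1) :
    HasDerivAt D1 (D2 x) x := by
  have hs := sAux_pos h
  have hs2 := sAux_sq (Set.mem_Icc.2 ⟨le_of_lt h.1, le_of_lt h.2⟩)
  have hsd : (2:ℝ) + sAux x ≠ 0 := by positivity
  have hS := hasDerivAt_sAux h
  -- numerator: (1 - s)^2
  have hu : HasDerivAt (fun y => (1 - sAux y) ^ 2)
      (2 * (1 - sAux x) * (x / sAux x)) x := by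
    have h1 : HasDerivAt (fun y => 1 - sAux y) (x / sAux x) x := by
      simpa [neg_div] using hS.const_sub 1
    simpa using (h1.fun_pow 2)
  -- denominator: s * (2+s)^2
  have hv : HasDerivAt (fun y => sAux y * (2 + sAux y) ^ 2)
      ((-x / sAux x) * (2 + sAux x) ^ 2 + sAux x * (2 * (2 + sAux x) * (-x / sAux x))) x := by
    have h2 : HasDerivAt (fun y => (2 + sAux y) ^ 2) (2 * (2 + sAux x) * (-x / sAux x)) x := by
      simpa using ((hS.const_add 2).fun_pow 2)
    exact hS.mul h2
  have hvne : sAux x * (2 + sAux x) ^ 2 ≠ 0 := by positivity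
  have := hu.div hv hvne
  refine this.congr_deriv ?_
  rw [D2]
  field_simp
  ring

noncomputable def W (x : ℝ) : ℝ := FF x - x ^ 5 / 180 - x ^ 7 / 189
noncomputable def W1 (x : ℝ) : ℝ := D1 x - x ^ 4 / 36 - x ^ 6 / 27
noncomputable def V (x : ℝ) : ℝ := x * W1 x - 9 * W x

lemma hasDerivAt_W {x : ℝ} (h : x ∈ Set.Ioo (-1:ℝ) 1) :
    HasDerivAt W (W1 x) x := by
  have h5 : HasDerivAt (fun y : ℝ => y ^ 5 / 180) (x ^ 4 / 36) x := by
    have := (hasDerivAt_pow 5 x).div_const 180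
    refine this.congr_deriv ?_; push_cast; ring
  have h7 : HasDerivAt (fun y : ℝ => y ^ 7 / 189) (x ^ 6 / 27) x := by
    have := (hasDerivAt_pow 7 x).div_const 189
    refine this.congr_deriv ?_; push_cast; ring
  exact ((hasDerivAt_FF h).sub h5).sub h7

lemma hasDerivAt_V {x : ℝ} (h : x ∈ Set.Ioo (-1:ℝ) 1) :
    HasDerivAt V (x * D2 x - 8 * D1 x + x ^ 4 / 9 + 2 * x ^ 6 / 27) x := by
  have hW1 : HasDerivAt W1 (D2 x - x ^ 3 / 9 - 2 * x ^ 5 / 9) x := by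
    have h4 : HasDerivAt (fun y : ℝ => y ^ 4 / 36) (x ^ 3 / 9) x := by
      have := (hasDerivAt_pow 4 x).div_const 36
      refine this.congr_deriv ?_; push_cast; ring
    have h6 : HasDerivAt (fun y : ℝ => y ^ 6 / 27) (2 * x ^ 5 / 9) x := by
      have := (hasDerivAt_pow 6 x).div_const 27
      refine this.congr_deriv ?_; push_cast; ring
    exact ((hasDerivAt_D1 h).sub h4).sub h6
  have := ((hasDerivAt_id x).mul hW1).sub ((hasDerivAt_W h).const_mul 9)
  refine this.congr_deriv ?_
  simp only [id_eq, W1]; ring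

lemma lower_deriv_pos {x : ℝ} (h : x ∈ Set.Ioo (0:ℝ) 1) :
    0 < D1 x - x ^ 4 / 36 - x ^ 6 / 27 - 23 * x ^ 8 / 576 := by
  have h' : x ∈ Set.Ioo (-1:ℝ) 1 := ⟨by linarith [h.1], h.2⟩
  set s := sAux x with hsdef
  have hs := sAux_pos h'
  have hs1 : s < 1 := sAux_lt_one (ne_of_gt h.1)
  have hs2 : s ^ 2 = 1 - x ^ 2 := sAux_sq ⟨by linarith [h.1], le_of_lt h.2⟩
  have hx2 : x ^ 2 = 1 - s ^ 2 := by linarith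
  have key : (1 - s) ^ 2 - s * (2 + s) ^ 2 * (x ^ 4 / 36 + x ^ 6 / 27 + 23 * x ^ 8 / 576)
      = (1 - s) ^ 5 * (1728 + 4460*s + 6024*s^2 + 4875*s^3 + 2351*s^4 + 621*s^5 + 69*s^6) / 1728 := by
    rw [show x ^ 4 = (x ^ 2) ^ 2 by ring, show x ^ 6 = (x ^ 2) ^ 3 by ring,
      show x ^ 8 = (x ^ 2) ^ 4 by ring, hx2]
    ring
  have hpos : 0 < (1 - s) ^ 2 - s * (2 + s) ^ 2 * (x ^ 4 / 36 + x ^ 6 / 27 + 23 * x ^ 8 / 576) := by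
    rw [key]
    have h1s : (0:ℝ) < 1 - s := by linarith
    have hpoly : (0:ℝ) < 1728 + 4460*s + 6024*s^2 + 4875*s^3 + 2351*s^4 + 621*s^5 + 69*s^6 := by
      nlinarith [pow_nonneg hs.le 2, pow_nonneg hs.le 3, pow_nonneg hs.le 4,
        pow_nonneg hs.le 5, pow_nonneg hs.le 6, hs.le]
    positivity
  have hden : (0:ℝ) < s * (2 + s) ^ 2 := by positivity
  have hD1 : D1 x - x ^ 4 / 36 - x ^ 6 / 27 - 23 * x ^ 8 / 576
      = ((1 - s) ^ 2 - s * (2 + s) ^ 2 * (x ^ 4 / 36 + x ^ 6 / 27 + 23 * x ^ 8 / 576))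
        / (s * (2 + s) ^ 2) := by
    rw [D1, ← hsdef]; have hsne : s ≠ 0 := ne_of_gt hs; have h2s : 2 + s ≠ 0 := ne_of_gt (add_pos two_pos hs); field_simp; ring
  rw [hD1]
  exact div_pos hpos hden

lemma upper_deriv_pos {x : ℝ} (h : x ∈ Set.Ioo (0:ℝ) 1) :
    0 < x * D2 x - 8 * D1 x + x ^ 4 / 9 + 2 * x ^ 6 / 27 := by
  have h' : x ∈ Set.Ioo (-1:ℝ) 1 := ⟨by linarith [h.1], h.2⟩
  set s := sAux x with hsdef
  have hs := sAux_pos h'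
  have hs1 : s < 1 := sAux_lt_one (ne_of_gt h.1)
  have hs2 : s ^ 2 = 1 - x ^ 2 := sAux_sq ⟨by linarith [h.1], le_of_lt h.2⟩
  have hx2 : x ^ 2 = 1 - s ^ 2 := by linarith
  have key : x ^ 2 * ((1 - s) * (2 + 5*s - s^2)) - 8 * (s^2 * (2 + s) * (1 - s)^2)
      + s ^ 3 * (2 + s) ^ 3 * (x ^ 4 / 9 + 2 * x ^ 6 / 27)
      = (1 - s) ^ 5 * (54 + 351*s + 567*s^2 + 499*s^3 + 287*s^4 + 105*s^5 + 22*s^6 + 2*s^7) / 27 := by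
    rw [show x ^ 4 = (x ^ 2) ^ 2 by ring, show x ^ 6 = (x ^ 2) ^ 3 by ring, hx2]
    ring
  have hpos : 0 < x ^ 2 * ((1 - s) * (2 + 5*s - s^2)) - 8 * (s^2 * (2 + s) * (1 - s)^2)
      + s ^ 3 * (2 + s) ^ 3 * (x ^ 4 / 9 + 2 * x ^ 6 / 27) := by
    rw [key]
    have h1s : (0:ℝ) < 1 - s := by linarith
    have hpoly : (0:ℝ) < 54 + 351*s + 567*s^2 + 499*s^3 + 287*s^4 + 105*s^5 + 22*s^6 + 2*s^7 := by
      nlinarith [pow_nonneg hs.le 2, pow_nonneg hs.le 3, pow_nonneg hs.le 4,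
        pow_nonneg hs.le 5, pow_nonneg hs.le 6, pow_nonneg hs.le 7, hs.le]
    positivity
  have hden : (0:ℝ) < s ^ 3 * (2 + s) ^ 3 := by positivity
  have heq : x * D2 x - 8 * D1 x + x ^ 4 / 9 + 2 * x ^ 6 / 27
      = (x ^ 2 * ((1 - s) * (2 + 5*s - s^2)) - 8 * (s^2 * (2 + s) * (1 - s)^2)
        + s ^ 3 * (2 + s) ^ 3 * (x ^ 4 / 9 + 2 * x ^ 6 / 27)) / (s ^ 3 * (2 + s) ^ 3) := by
    rw [D2, D1, ← hsdef]; have hsne : s ≠ 0 := ne_of_gt hs; have h2s : 2 + s ≠ 0 := ne_of_gt (add_pos two_pos hs); field_simp; ring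
  rw [heq]
  exact div_pos hpos hden

lemma continuous_sAux : Continuous sAux :=
  Real.continuous_sqrt.comp (by continuity)

lemma continuous_FF : Continuous FF := by
  apply Real.continuous_arcsin.sub
  apply Continuous.div (by continuity) (continuous_const.add continuous_sAux)
  intro y
  have := sAux_nonneg y
  exact ne_of_gt (add_pos_of_pos_of_nonneg two_pos this)

lemma continuous_W : Continuous W := by
  exact (continuous_FF.sub (by continuity)).sub (by continuity)

lemma FF_zero : FF 0 = 0 := by simp [FF]

lemma W_zero : W 0 = 0 := by simp [W, FF_zero]

lemma continuousOn_D1 : ContinuousOn D1 (Set.Ico (0:ℝ) 1) := by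
  apply ContinuousOn.div
  · exact ((continuous_const.sub continuous_sAux).pow 2).continuousOn
  · exact (continuous_sAux.mul ((continuous_const.add continuous_sAux).pow 2)).continuousOn
  · intro y hy
    have hs : 0 < sAux y := sAux_pos ⟨by linarith [hy.1], hy.2⟩
    positivity

lemma continuousOn_V : ContinuousOn V (Set.Ico (0:ℝ) 1) := by
  apply ContinuousOn.sub
  · exact continuous_id.continuousOn.mul
      ((continuousOn_D1.sub (by fun_prop)).sub (by fun_prop))
  · exact (continuous_const.mul continuous_W).continuousOn

lemma V_pos {x : ℝ} (h : x ∈ Set.Ioo (0:ℝ) 1) : 0 < V x := by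
  have hmono : StrictMonoOn V (Set.Ico (0:ℝ) 1) := by
    apply strictMonoOn_of_deriv_pos (convex_Ico 0 1) continuousOn_V
    intro y hy
    rw [interior_Ico] at hy
    have hy' : y ∈ Set.Ioo (-1:ℝ) 1 := ⟨by linarith [hy.1], hy.2⟩
    rw [(hasDerivAt_V hy').deriv]
    exact upper_deriv_pos hy
  have := hmono (Set.mem_Ico.2 ⟨le_refl 0, one_pos⟩)
    (Set.mem_Ico.2 ⟨h.1.le, h.2⟩) h.1
  have hV0 : V 0 = 0 := by simp [V, W_zero]
  linarith [this, hV0.symm.le]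

lemma U_mono : StrictMonoOn (fun y => W y / y ^ 9) (Set.Ioc (0:ℝ) 1) := by
  apply strictMonoOn_of_deriv_pos (convex_Ioc 0 1)
  · apply ContinuousOn.div continuous_W.continuousOn (by fun_prop)
    intro y hy
    have : 0 < y := hy.1
    positivity
  · intro y hy
    rw [interior_Ioc] at hy
    have hy' : y ∈ Set.Ioo (-1:ℝ) 1 := ⟨by linarith [hy.1], hy.2⟩
    have hy0 : (0:ℝ) < y := hy.1
    have hyne : y ^ 9 ≠ 0 := by positivity
    have hd : HasDerivAt (fun z => W z / z ^ 9)
        ((W1 y * y ^ 9 - W y * ((9:ℕ) * y ^ 8)) / (y ^ 9) ^ 2) y :=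
      (hasDerivAt_W hy').div (hasDerivAt_pow 9 y) hyne
    rw [hd.deriv]
    have heq : (W1 y * y ^ 9 - W y * ((9:ℕ) * y ^ 8)) / (y ^ 9) ^ 2 = V y / y ^ 10 := by
      rw [V]
      have hy0 : y ≠ 0 := ne_of_gt hy.1
      field_simp
      ring
    rw [heq]
    exact div_pos (V_pos hy) (by positivity)

lemma W_one : W 1 = π / 2 - 3 / 2 - 1 / 180 - 1 / 189 := by
  have : sAux 1 = 0 := by simp [sAux]
  rw [W, FF, this]
  norm_num [Real.arcsin_one]

lemma lower_mono : StrictMonoOn (fun y => W y - 23 * y ^ 9 / 5184) (Set.Icc (0:ℝ) 1) := by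
  apply strictMonoOn_of_deriv_pos (convex_Icc 0 1)
    (continuous_W.sub (by continuity)).continuousOn
  intro y hy
  rw [interior_Icc] at hy
  have hy' : y ∈ Set.Ioo (-1:ℝ) 1 := ⟨by linarith [hy.1], hy.2⟩
  have hp : HasDerivAt (fun z : ℝ => 23 * z ^ 9 / 5184) (23 * y ^ 8 / 576) y := by
    have := ((hasDerivAt_pow 9 y).const_mul 23).div_const 5184
    refine this.congr_deriv ?_
    push_cast; ring
  rw [((hasDerivAt_W hy').sub hp).deriv]
  have := lower_deriv_pos hy
  rw [W1] at *
  linarith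

theorem shafer3_n4 (x : ℝ) (hx : x ∈ Set.Ioo (0 : ℝ) 1) :
    x ^ 5 / 180 + x ^ 7 / 189 + 23 * x ^ 9 / 5184
      < Real.arcsin x - 3 * x / (2 + Real.sqrt (1 - x ^ 2)) ∧
    Real.arcsin x - 3 * x / (2 + Real.sqrt (1 - x ^ 2))
      < x ^ 5 / 180 + x ^ 7 / 189 + (-(5711 / 3780) + π / 2) * x ^ 9 := by
  have hFF : Real.arcsin x - 3 * x / (2 + Real.sqrt (1 - x ^ 2)) = FF x := rfl
  constructor
  · have h0 : (0:ℝ) ∈ Set.Icc (0:ℝ) 1 := by constructor <;> norm_num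
    have hxm : x ∈ Set.Icc (0:ℝ) 1 := ⟨hx.1.le, hx.2.le⟩
    have := lower_mono h0 hxm hx.1
    simp only [W_zero] at this
    rw [hFF]
    rw [W] at this
    norm_num at this ⊢
    linarith
  · have hxm : x ∈ Set.Ioc (0:ℝ) 1 := ⟨hx.1, hx.2.le⟩
    have h1 : (1:ℝ) ∈ Set.Ioc (0:ℝ) 1 := by constructor <;> norm_num
    have := U_mono hxm h1 hx.2
    simp only [one_pow, div_one] at this
    rw [W_one] at this
    have hx0 : (0:ℝ) < x := hx.1
    have hx9 : (0:ℝ) < x ^ 9 := by positivity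
    rw [div_lt_iff₀ hx9] at this
    rw [hFF]
    rw [W] at this
    have hc : π / 2 - 3 / 2 - 1 / 180 - 1 / 189 = -(5711 / 3780) + π / 2 := by
      have h : (3:ℝ) / 2 + 1 / 180 + 1 / 189 = 5711 / 3780 := by norm_num
      linarith
    nlinarith [this]
end

section
/- For every x ∈ (0,1): x⁵/180 + x⁷/189 + 23x⁹/5184 + 629x¹¹/171072 < arcsin x − 3x/(2+√(1−x²)) < x⁵/180 + x⁷/189 + 23x⁹/5184 + (−274933/181440 + π/2)·x¹¹. -/
open Real

noncomputable def rhoP (s : ℝ) : ℝ :=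
  1 + 6647/1944*s + 11537/1944*s^2 + 48901/7776*s^3 + 2729/648*s^4
    + 27055/15552*s^5 + 3145/7776*s^6 + 629/15552*s^7

noncomputable def chiP (D s : ℝ) : ℝ :=
  D*(s*(1+s)^5*(2+s)^2) - (1-s)*rhoP s

lemma rhoP_pos {s : ℝ} (hs : 0 < s) : 0 < rhoP s := by
  have h2 := pow_pos hs 2
  have h3 := pow_pos hs 3
  have h4 := pow_pos hs 4
  have h5 := pow_pos hs 5
  have h6 := pow_pos hs 6
  have h7 := pow_pos hs 7
  unfold rhoP; linarith

lemma chiP_neg {D s : ℝ} (hD : D < 58/100) (h0 : 0 < s) (h64 : s ≤ 1/64) :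
    chiP D s < 0 := by
  have h1s : (0:ℝ) < 1 + s := by linarith
  have hg : 0 ≤ s*(1+s)^5*(2+s)^2 :=
    mul_nonneg (mul_nonneg h0.le (pow_nonneg h1s.le 5)) (pow_nonneg (by linarith) 2)
  have hupper : D*(s*(1+s)^5*(2+s)^2) ≤ (58/100)*(s*(1+s)^5*(2+s)^2) :=
    mul_le_mul_of_nonneg_right hD.le hg
  have e2 : s^2 ≤ (1/64)*s := by nlinarith
  have e3 : s^3 ≤ (1/64)^2*s := by nlinarith
  have e4 : s^4 ≤ (1/64)^3*s := by nlinarith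
  have e5 : s^5 ≤ (1/64)^4*s := by nlinarith
  have e6 : s^6 ≤ (1/64)^5*s := by nlinarith
  have e7 : s^7 ≤ (1/64)^6*s := by nlinarith
  have e8 : s^8 ≤ (1/64)^7*s := by nlinarith
  have key : (58/100)*(s*(1+s)^5*(2+s)^2) - (1-s)*rhoP s < 0 := by
    unfold rhoP; nlinarith [e2, e3, e4, e5, e6, e7, e8]
  unfold chiP; linarith

lemma chiP_mono {D : ℝ} (hD : 57/100 < D) :
    StrictMonoOn (chiP D) (Set.Icc (1/64 : ℝ) 1) := by
  apply strictMonoOn_of_deriv_pos (convex_Icc _ _)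
  · apply Continuous.continuousOn
    unfold chiP rhoP
    fun_prop
  · intro s hs
    rw [interior_Icc] at hs
    obtain ⟨h64, h1⟩ := hs
    have h0 : 0 < s := by linarith
    have h1p : HasDerivAt (fun u : ℝ => (1+u)^5) (5*(1+s)^4) s := by
      simpa using ((hasDerivAt_id s).const_add 1).fun_pow 5
    have h2p : HasDerivAt (fun u : ℝ => (2+u)^2) (2*(2+s)) s := by
      simpa using ((hasDerivAt_id s).const_add 2).fun_pow 2
    have hgd : HasDerivAt (fun u : ℝ => u*(1+u)^5*(2+u)^2)
        ((1*(1+s)^5 + s*(5*(1+s)^4))*(2+s)^2 + s*(1+s)^5*(2*(2+s))) s :=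
      ((hasDerivAt_id s).mul h1p).mul h2p
    have hρd : HasDerivAt rhoP
        (6647/1944 + 11537/972*s + 48901/2592*s^2 + 2729/162*s^3
          + 135275/15552*s^4 + 3145/1296*s^5 + 4403/15552*s^6) s := by
      unfold rhoP
      have h1 := (hasDerivAt_id s).const_mul (6647/1944 : ℝ)
      have h2 := (hasDerivAt_pow 2 s).const_mul (11537/1944 : ℝ)
      have h3 := (hasDerivAt_pow 3 s).const_mul (48901/7776 : ℝ)
      have h4 := (hasDerivAt_pow 4 s).const_mul (2729/648 : ℝ)
      have h5 := (hasDerivAt_pow 5 s).const_mul (27055/15552 : ℝ)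
      have h6 := (hasDerivAt_pow 6 s).const_mul (3145/7776 : ℝ)
      have h7 := (hasDerivAt_pow 7 s).const_mul (629/15552 : ℝ)
      have h8 := ((((((h1.fun_add h2).fun_add h3).fun_add h4).fun_add h5).fun_add h6).fun_add h7).const_add 1
      refine (h8.congr_deriv (by push_cast; ring)).congr_of_eventuallyEq
        (Filter.Eventually.of_forall fun u => by simp only [id_eq]; ring)
    have hh2 : HasDerivAt (fun u : ℝ => (1-u)*rhoP u)
        ((-1)*rhoP s + (1-s)*(6647/1944 + 11537/972*s + 48901/2592*s^2 + 2729/162*s^3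
          + 135275/15552*s^4 + 3145/1296*s^5 + 4403/15552*s^6)) s := by
      exact (((hasDerivAt_id s).const_sub 1)).mul hρd
    have hfd : HasDerivAt (chiP D)
        (D*((1*(1+s)^5 + s*(5*(1+s)^4))*(2+s)^2 + s*(1+s)^5*(2*(2+s)))
          - ((-1)*rhoP s + (1-s)*(6647/1944 + 11537/972*s + 48901/2592*s^2 + 2729/162*s^3
          + 135275/15552*s^4 + 3145/1296*s^5 + 4403/15552*s^6))) s := by
      exact (hgd.const_mul D).sub hh2
    rw [hfd.deriv]
    have hE : D*((1*(1+s)^5 + s*(5*(1+s)^4))*(2+s)^2 + s*(1+s)^5*(2*(2+s)))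
          - ((-1)*rhoP s + (1-s)*(6647/1944 + 11537/972*s + 48901/2592*s^2 + 2729/162*s^3
          + 135275/15552*s^4 + 3145/1296*s^5 + 4403/15552*s^6))
        = D*(4+48*s+183*s^2+340*s^3+350*s^4+204*s^5+63*s^6+8*s^7)
          + (-4703/1944 - 815/162*s - 2753/2592*s^2 + 16153/1944*s^3
            + 192205/15552*s^4 + 20765/2592*s^5 + 4403/1728*s^6 + 629/1944*s^7) := by
      unfold rhoP; ring
    rw [hE]
    have hgp : (0:ℝ) ≤ 4+48*s+183*s^2+340*s^3+350*s^4+204*s^5+63*s^6+8*s^7 := by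
      have := pow_pos h0 2; have := pow_pos h0 3; have := pow_pos h0 4
      have := pow_pos h0 5; have := pow_pos h0 6; have := pow_pos h0 7
      linarith
    have hDg : (57/100)*(4+48*s+183*s^2+340*s^3+350*s^4+204*s^5+63*s^6+8*s^7)
        ≤ D*(4+48*s+183*s^2+340*s^3+350*s^4+204*s^5+63*s^6+8*s^7) :=
      mul_le_mul_of_nonneg_right hD.le hgp
    have ht : (0:ℝ) ≤ s - 1/64 := by linarith
    have base : 0 < (57/100)*(4+48*s+183*s^2+340*s^3+350*s^4+204*s^5+63*s^6+8*s^7)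
          + (-4703/1944 - 815/162*s - 2753/2592*s^2 + 16153/1944*s^3
            + 192205/15552*s^4 + 20765/2592*s^5 + 4403/1728*s^6 + 629/1944*s^7) := by
      nlinarith [ht, pow_nonneg ht 2, pow_nonneg ht 3, pow_nonneg ht 4,
        pow_nonneg ht 5, pow_nonneg ht 6, pow_nonneg ht 7]
    linarith

lemma cont_core : Continuous (fun t : ℝ => 3*t/(2+Real.sqrt (1-t^2))) := by
  apply Continuous.div (by fun_prop) (by fun_prop)
  intro t
  have := Real.sqrt_nonneg (1-t^2)
  positivity

lemma hasDerivAt_core {y : ℝ} (h0 : 0 < y) (h1 : y < 1) :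
    HasDerivAt (fun t : ℝ => 3*t/(2+Real.sqrt (1-t^2)))
      ((3*(2+Real.sqrt (1-y^2)) + 3*y^2/Real.sqrt (1-y^2))/(2+Real.sqrt (1-y^2))^2) y := by
  have hy2 : (0:ℝ) < 1 - y^2 := by nlinarith
  have hs0 : 0 < Real.sqrt (1-y^2) := Real.sqrt_pos.mpr hy2
  have hsne : Real.sqrt (1-y^2) ≠ 0 := hs0.ne'
  have hinner : HasDerivAt (fun t : ℝ => 1 - t^2) (-(2*y)) y := by
    simpa using (hasDerivAt_pow 2 y).const_sub 1
  have hsq : HasDerivAt (fun t : ℝ => Real.sqrt (1 - t^2))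
      (1/(2*Real.sqrt (1-y^2)) * (-(2*y))) y :=
    (Real.hasDerivAt_sqrt (ne_of_gt hy2)).comp y hinner
  have hnum : HasDerivAt (fun t : ℝ => 3*t) 3 y := by
    simpa using (hasDerivAt_id y).const_mul (3:ℝ)
  have hden : HasDerivAt (fun t : ℝ => 2 + Real.sqrt (1 - t^2))
      (1/(2*Real.sqrt (1-y^2)) * (-(2*y))) y := hsq.const_add 2
  have hne : (2 + Real.sqrt (1 - y^2)) ≠ 0 := by positivity
  have h := hnum.div hden hne
  refine h.congr_deriv ?_
  field_simp
  ring

set_option maxHeartbeats 2000000 in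
theorem shafer3_n5 (x : ℝ) (hx : x ∈ Set.Ioo (0 : ℝ) 1) :
    x ^ 5 / 180 + x ^ 7 / 189 + 23 * x ^ 9 / 5184 + 629 * x ^ 11 / 171072
      < Real.arcsin x - 3 * x / (2 + Real.sqrt (1 - x ^ 2)) ∧
    Real.arcsin x - 3 * x / (2 + Real.sqrt (1 - x ^ 2))
      < x ^ 5 / 180 + x ^ 7 / 189 + 23 * x ^ 9 / 5184
        + (-(274933 / 181440) + π / 2) * x ^ 11 := by
  obtain ⟨hx0, hx1⟩ := hx
  constructor
  · -- lower bound
    have key : StrictMonoOn (fun t : ℝ => Real.arcsin t - 3*t/(2+Real.sqrt (1-t^2))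
        - (t^5/180 + t^7/189 + 23*t^9/5184 + 629*t^11/171072)) (Set.Icc 0 x) := by
      apply strictMonoOn_of_deriv_pos (convex_Icc _ _)
      · exact ((Real.continuous_arcsin.sub cont_core).sub (by fun_prop)).continuousOn
      · intro y hy
        rw [interior_Icc] at hy
        have hy0 : 0 < y := hy.1
        have hy1 : y < 1 := hy.2.trans hx1
        have hdL : HasDerivAt (fun t : ℝ => t^5/180 + t^7/189 + 23*t^9/5184 + 629*t^11/171072)
            (y^4/36 + y^6/27 + 23*y^8/576 + 6919*y^10/171072) y := by
          have h5 := (hasDerivAt_pow 5 y).div_const 180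
          have h7 := (hasDerivAt_pow 7 y).div_const 189
          have h9 := ((hasDerivAt_pow 9 y).const_mul (23:ℝ)).div_const 5184
          have h11 := ((hasDerivAt_pow 11 y).const_mul (629:ℝ)).div_const 171072
          have h := ((h5.fun_add h7).fun_add h9).fun_add h11
          refine h.congr_deriv ?_
          push_cast; ring
        have hdF := ((Real.hasDerivAt_arcsin ((by linarith : (-1:ℝ) < y).ne')
            hy1.ne).fun_sub (hasDerivAt_core hy0 hy1)).fun_sub hdL
        rw [hdF.deriv]
        have hσ2 : Real.sqrt (1-y^2)^2 = 1 - y^2 := Real.sq_sqrt (by nlinarith)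
        have hσ0 : 0 < Real.sqrt (1-y^2) := Real.sqrt_pos.mpr (by nlinarith)
        set σ := Real.sqrt (1-y^2) with hσdef
        have hσ1 : σ < 1 := by nlinarith
        have e2 : y^2 = 1 - σ^2 := by linarith
        have e4 : y^4 = (1-σ^2)^2 := by rw [show y^4 = (y^2)^2 by ring, e2]
        have e6 : y^6 = (1-σ^2)^3 := by rw [show y^6 = (y^2)^3 by ring, e2]
        have e8 : y^8 = (1-σ^2)^4 := by rw [show y^8 = (y^2)^4 by ring, e2]
        have e10 : y^10 = (1-σ^2)^5 := by rw [show y^10 = (y^2)^5 by ring, e2]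
        rw [e4, e6, e8, e10, e2]
        have key2 : 1/σ - (3*(2+σ) + 3*(1-σ^2)/σ)/(2+σ)^2
            - ((1-σ^2)^2/36 + (1-σ^2)^3/27 + 23*(1-σ^2)^4/576 + 6919*(1-σ^2)^5/171072)
            = (1-σ)^6 * rhoP σ / (σ*(2+σ)^2) := by
          unfold rhoP
          field_simp
          ring
        rw [key2]
        exact div_pos (mul_pos (pow_pos (by linarith) 6) (rhoP_pos hσ0))
          (mul_pos hσ0 (by positivity))
    have h0mem : (0:ℝ) ∈ Set.Icc 0 x := ⟨le_refl 0, hx0.le⟩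
    have hxmem : x ∈ Set.Icc 0 x := ⟨hx0.le, le_refl x⟩
    have h := key h0mem hxmem hx0
    norm_num [Real.arcsin_zero] at h
    linarith
  · -- upper bound
    set D := 11*(-(274933/181440 : ℝ)+π/2) - 6919/171072 with hD_def
    have hD1 : 57/100 < D := by
      rw [hD_def]; nlinarith [Real.pi_gt_d6]
    have hD2 : D < 58/100 := by
      rw [hD_def]; nlinarith [Real.pi_lt_d6]
    have hs2 : Real.sqrt (1-x^2)^2 = 1-x^2 := Real.sq_sqrt (by nlinarith)
    have hs0 : 0 < Real.sqrt (1-x^2) := Real.sqrt_pos.mpr (by nlinarith)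
    have hs1 : Real.sqrt (1-x^2) < 1 := by nlinarith
    have hHcont : Continuous (fun t : ℝ => 3*t/(2+Real.sqrt (1-t^2))
        + (t^5/180 + t^7/189 + 23*t^9/5184 + (-(274933/181440)+π/2)*t^11) - Real.arcsin t) :=
      (cont_core.add (by fun_prop)).sub Real.continuous_arcsin
    have hderiv : ∀ y : ℝ, 0 < y → y < 1 →
        deriv (fun t : ℝ => 3*t/(2+Real.sqrt (1-t^2))
          + (t^5/180 + t^7/189 + 23*t^9/5184 + (-(274933/181440)+π/2)*t^11) - Real.arcsin t) y
        = (1-Real.sqrt (1-y^2))^5 * chiP D (Real.sqrt (1-y^2))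
            / (Real.sqrt (1-y^2)*(2+Real.sqrt (1-y^2))^2) := by
      intro y hy0 hy1
      have hdU : HasDerivAt (fun t : ℝ => t^5/180 + t^7/189 + 23*t^9/5184
          + (-(274933/181440)+π/2)*t^11)
          (y^4/36 + y^6/27 + 23*y^8/576 + 11*(-(274933/181440)+π/2)*y^10) y := by
        have h5 := (hasDerivAt_pow 5 y).div_const 180
        have h7 := (hasDerivAt_pow 7 y).div_const 189
        have h9 := ((hasDerivAt_pow 9 y).const_mul (23:ℝ)).div_const 5184
        have h11 := (hasDerivAt_pow 11 y).const_mul ((-(274933/181440 : ℝ)+π/2))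
        have h := ((h5.fun_add h7).fun_add h9).fun_add h11
        refine h.congr_deriv ?_
        push_cast; ring
      have hdH := ((hasDerivAt_core hy0 hy1).fun_add hdU).fun_sub
        (Real.hasDerivAt_arcsin ((by linarith : (-1:ℝ) < y).ne') hy1.ne)
      rw [hdH.deriv]
      have hσ2 : Real.sqrt (1-y^2)^2 = 1 - y^2 := Real.sq_sqrt (by nlinarith)
      have hσ0 : 0 < Real.sqrt (1-y^2) := Real.sqrt_pos.mpr (by nlinarith)
      set σ := Real.sqrt (1-y^2) with hσdef
      have hσ1 : σ < 1 := by nlinarith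
      have e2 : y^2 = 1 - σ^2 := by linarith
      have e4 : y^4 = (1-σ^2)^2 := by rw [show y^4 = (y^2)^2 by ring, e2]
      have e6 : y^6 = (1-σ^2)^3 := by rw [show y^6 = (y^2)^3 by ring, e2]
      have e8 : y^8 = (1-σ^2)^4 := by rw [show y^8 = (y^2)^4 by ring, e2]
      have e10 : y^10 = (1-σ^2)^5 := by rw [show y^10 = (y^2)^5 by ring, e2]
      rw [e4, e6, e8, e10, e2]
      rw [show 11*(-(274933/181440 : ℝ)+π/2) = D + 6919/171072 by rw [hD_def]; ring]
      unfold chiP rhoP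
      field_simp
      ring
    rcases le_or_gt (chiP D (Real.sqrt (1-x^2))) 0 with hc | hc
    · -- decreasing on [x,1]
      have hanti : StrictAntiOn (fun t : ℝ => 3*t/(2+Real.sqrt (1-t^2))
          + (t^5/180 + t^7/189 + 23*t^9/5184 + (-(274933/181440)+π/2)*t^11) - Real.arcsin t)
          (Set.Icc x 1) := by
        apply strictAntiOn_of_deriv_neg (convex_Icc _ _) hHcont.continuousOn
        intro y hy
        rw [interior_Icc] at hy
        have hxy : x < y := hy.1
        have hy0 : 0 < y := hx0.trans hxy
        have hy1 : y < 1 := hy.2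
        rw [hderiv y hy0 hy1]
        have hσ2 : Real.sqrt (1-y^2)^2 = 1 - y^2 := Real.sq_sqrt (by nlinarith)
        have hσ0 : 0 < Real.sqrt (1-y^2) := Real.sqrt_pos.mpr (by nlinarith)
        have hσ1 : Real.sqrt (1-y^2) < 1 := by nlinarith
        have hσs : Real.sqrt (1-y^2) < Real.sqrt (1-x^2) :=
          Real.sqrt_lt_sqrt (by nlinarith) (by nlinarith)
        have hχσ : chiP D (Real.sqrt (1-y^2)) < 0 := by
          rcases le_or_gt (Real.sqrt (1-y^2)) (1/64) with h | h
          · exact chiP_neg hD2 hσ0 h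
          · have := chiP_mono hD1 (Set.mem_Icc.mpr ⟨h.le, hσ1.le⟩)
              (Set.mem_Icc.mpr ⟨(h.trans hσs).le, hs1.le⟩) hσs
            linarith
        exact div_neg_of_neg_of_pos
          (mul_neg_of_pos_of_neg (pow_pos (by linarith) 5) hχσ)
          (mul_pos hσ0 (by positivity))
      have h := hanti (Set.mem_Icc.mpr ⟨le_refl x, hx1.le⟩)
        (Set.mem_Icc.mpr ⟨hx1.le, le_refl 1⟩) hx1
      norm_num [Real.arcsin_one] at h
      linarith
    · -- increasing on [0,x]
      have hs64 : 1/64 < Real.sqrt (1-x^2) := by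
        by_contra hcon
        push_neg at hcon
        have := chiP_neg hD2 hs0 hcon
        linarith
      have hmono : StrictMonoOn (fun t : ℝ => 3*t/(2+Real.sqrt (1-t^2))
          + (t^5/180 + t^7/189 + 23*t^9/5184 + (-(274933/181440)+π/2)*t^11) - Real.arcsin t)
          (Set.Icc 0 x) := by
        apply strictMonoOn_of_deriv_pos (convex_Icc _ _) hHcont.continuousOn
        intro y hy
        rw [interior_Icc] at hy
        have hyx : y < x := hy.2
        have hy0 : 0 < y := hy.1
        have hy1 : y < 1 := hyx.trans hx1
        rw [hderiv y hy0 hy1]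
        have hσ2 : Real.sqrt (1-y^2)^2 = 1 - y^2 := Real.sq_sqrt (by nlinarith)
        have hσ0 : 0 < Real.sqrt (1-y^2) := Real.sqrt_pos.mpr (by nlinarith)
        have hσ1 : Real.sqrt (1-y^2) < 1 := by nlinarith
        have hσs : Real.sqrt (1-x^2) < Real.sqrt (1-y^2) :=
          Real.sqrt_lt_sqrt (by nlinarith) (by nlinarith)
        have hχσ : 0 < chiP D (Real.sqrt (1-y^2)) := by
          have := chiP_mono hD1 (Set.mem_Icc.mpr ⟨hs64.le, hs1.le⟩)
            (Set.mem_Icc.mpr ⟨(hs64.trans hσs).le, hσ1.le⟩) hσs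
          linarith
        exact div_pos (mul_pos (pow_pos (by linarith) 5) hχσ)
          (mul_pos hσ0 (by positivity))
      have h := hmono (Set.mem_Icc.mpr ⟨le_refl 0, hx0.le⟩)
        (Set.mem_Icc.mpr ⟨hx0.le, le_refl x⟩) hx0
      norm_num [Real.arcsin_zero] at h
      linarith
end

section
/- For every x ∈ (0,1): (1−π/3)·x + (1/6−π/18)·x³ + (3/40−5π/216)·x⁵ + (5/112−17π/1296)·x⁷ < arcsin x − πx/(2+√(1−x²)) < (1−π/3)·x + (1/6−π/18)·x³ + (3/40−5π/216)·x⁵ + (−149/120 + 89π/216)·x⁷. -/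
open Real
set_option maxHeartbeats 1000000

private lemma poly_hasDeriv (a b c d y : ℝ) :
    HasDerivAt (fun t : ℝ => a * t + b * t ^ 3 + c * t ^ 5 + d * t ^ 7)
      (a + 3 * b * y ^ 2 + 5 * c * y ^ 4 + 7 * d * y ^ 6) y := by
  have H : HasDerivAt (fun t : ℝ => a * t + b * t ^ 3 + c * t ^ 5 + d * t ^ 7)
      (a * 1 + b * (↑3 * y ^ 2) + c * (↑5 * y ^ 4) + d * (↑7 * y ^ 6)) y := by
    exact ((((hasDerivAt_id y).const_mul a).add ((hasDerivAt_pow 3 y).const_mul b)).add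
      ((hasDerivAt_pow 5 y).const_mul c)).add ((hasDerivAt_pow 7 y).const_mul d)
  convert H using 1
  ring

private lemma core_hasDeriv {y : ℝ} (h0 : 0 < y) (h1 : y < 1) :
    HasDerivAt (fun t : ℝ => Real.arcsin t - π * t / (2 + Real.sqrt (1 - t ^ 2)))
      (((2 + Real.sqrt (1 - y ^ 2)) ^ 2 - π * (1 + 2 * Real.sqrt (1 - y ^ 2)))
        / (Real.sqrt (1 - y ^ 2) * (2 + Real.sqrt (1 - y ^ 2)) ^ 2)) y := by
  have hq : (0:ℝ) < 1 - y ^ 2 := by nlinarith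
  have hs0 : 0 < Real.sqrt (1 - y ^ 2) := Real.sqrt_pos.mpr hq
  have hs2 : (Real.sqrt (1 - y ^ 2)) ^ 2 = 1 - y ^ 2 := Real.sq_sqrt hq.le
  set s := Real.sqrt (1 - y ^ 2) with hs
  have hin : HasDerivAt (fun t : ℝ => 1 - t ^ 2) (-(2 * y)) y := by
    simpa using (hasDerivAt_pow 2 y).const_sub 1
  have hsq : HasDerivAt (fun t : ℝ => Real.sqrt (1 - t ^ 2)) (-(2 * y) / (2 * s)) y :=
    hin.sqrt hq.ne'
  have hden : HasDerivAt (fun t : ℝ => 2 + Real.sqrt (1 - t ^ 2)) (-(2 * y) / (2 * s)) y :=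
    hsq.const_add 2
  have hnum : HasDerivAt (fun t : ℝ => π * t) π y := by
    simpa using (hasDerivAt_id y).const_mul π
  have hne : 2 + s ≠ 0 := by positivity
  have hdiv := hnum.div hden hne
  have ha : HasDerivAt Real.arcsin (1 / s) y :=
    hasDerivAt_arcsin (by linarith) (by linarith)
  have htot := ha.sub hdiv
  convert htot using 1
  case e'_4 => rfl
  case e'_5 => rfl
  case e'_8 => rfl
  rw [← hs]
  field_simp
  linear_combination π * hs2

private lemma algLow {s : ℝ} (h0 : 0 < s) (h1 : s < 1) :
    s * (2 + s) ^ 2 * ((1 - π / 3) + (1 / 2 - π / 6) * (1 - s ^ 2)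
      + (3 / 8 - 25 * π / 216) * (1 - s ^ 2) ^ 2
      + (5 / 16 - 119 * π / 1296) * (1 - s ^ 2) ^ 3) < (2 + s) ^ 2 - π * (1 + 2 * s) := by
  have hpu := Real.pi_lt_d2
  have hpl := Real.pi_gt_d6
  have key : (2 + s) ^ 2 - π * (1 + 2 * s) - s * (2 + s) ^ 2 * ((1 - π / 3)
      + (1 / 2 - π / 6) * (1 - s ^ 2) + (3 / 8 - 25 * π / 216) * (1 - s ^ 2) ^ 2
      + (5 / 16 - 119 * π / 1296) * (1 - s ^ 2) ^ 3)
      = (1 - s) ^ 4 * ((4 - π) + (45 / 4 - 1027 * π / 324) * s + (53 / 4 - 1247 * π / 324) * s ^ 2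
        + (129 / 16 - 1021 * π / 432) * s ^ 3 + (5 / 2 - 119 * π / 162) * s ^ 4
        + (5 / 16 - 119 * π / 1296) * s ^ 5) := by ring
  have h4 : (0:ℝ) < (1 - s) ^ 4 := pow_pos (by linarith) 4
  have e1 : (0:ℝ) ≤ (3.15 - π) * s := mul_nonneg (by linarith) h0.le
  have e2 : (0:ℝ) ≤ (3.15 - π) * s ^ 2 := mul_nonneg (by linarith) (by positivity)
  have e3 : (0:ℝ) ≤ (3.15 - π) * s ^ 3 := mul_nonneg (by linarith) (by positivity)
  have e4 : (0:ℝ) ≤ (3.15 - π) * s ^ 4 := mul_nonneg (by linarith) (by positivity)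
  have e5 : (0:ℝ) ≤ (3.15 - π) * s ^ 5 := mul_nonneg (by linarith) (by positivity)
  have hA : (0:ℝ) < (4 - π) + (45 / 4 - 1027 * π / 324) * s + (53 / 4 - 1247 * π / 324) * s ^ 2
      + (129 / 16 - 1021 * π / 432) * s ^ 3 + (5 / 2 - 119 * π / 162) * s ^ 4
      + (5 / 16 - 119 * π / 1296) * s ^ 5 := by
    linarith [h0.le, pow_nonneg h0.le 2, pow_nonneg h0.le 3, pow_nonneg h0.le 4,
      pow_nonneg h0.le 5, e1, e2, e3, e4, e5]
  linarith [mul_pos h4 hA, key]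

private lemma algUp1 {s : ℝ} (h0 : 0 < s) (h1 : s < 1) (h2 : 18639 / 250000 < s ^ 2) :
    (2 + s) ^ 2 - π * (1 + 2 * s) < s * (2 + s) ^ 2 * ((1 - π / 3)
      + (1 / 2 - π / 6) * (1 - s ^ 2) + (3 / 8 - 25 * π / 216) * (1 - s ^ 2) ^ 2
      + (-(1043 / 120) + 623 * π / 216) * (1 - s ^ 2) ^ 3) := by
  have hpu := Real.pi_lt_d6
  have hpl := Real.pi_gt_d6
  have hl : (273 / 1000 : ℝ) ≤ s := by nlinarith
  have ht : (0:ℝ) ≤ s - 273 / 1000 := by linarith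
  have key : s * (2 + s) ^ 2 * ((1 - π / 3)
      + (1 / 2 - π / 6) * (1 - s ^ 2) + (3 / 8 - 25 * π / 216) * (1 - s ^ 2) ^ 2
      + (-(1043 / 120) + 623 * π / 216) * (1 - s ^ 2) ^ 3) - ((2 + s) ^ 2 - π * (1 + 2 * s))
      = (1 - s) ^ 3 * ((-4 + π) + (-(649 / 15) + 380 * π / 27) * s
        + (-(2191 / 15) + 1304 * π / 27) * s ^ 2 + (-(2639 / 12) + 875 * π / 12) * s ^ 3
        + (-(9931 / 60) + 659 * π / 12) * s ^ 4 + (-(7301 / 120) + 4361 * π / 216) * s ^ 5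
        + (-(1043 / 120) + 623 * π / 216) * s ^ 6) := by ring
  have p1 : (0:ℝ) ≤ (π - 3.141592) * (s - 273 / 1000) := mul_nonneg (by linarith) ht
  have q1 : (0:ℝ) ≤ (3.141593 - π) * (s - 273 / 1000) := mul_nonneg (by linarith) ht
  have p2 : (0:ℝ) ≤ (π - 3.141592) * (s - 273 / 1000) ^ 2 := mul_nonneg (by linarith) (by positivity)
  have q2 : (0:ℝ) ≤ (3.141593 - π) * (s - 273 / 1000) ^ 2 := mul_nonneg (by linarith) (by positivity)
  have p3 : (0:ℝ) ≤ (π - 3.141592) * (s - 273 / 1000) ^ 3 := mul_nonneg (by linarith) (by positivity)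
  have q3 : (0:ℝ) ≤ (3.141593 - π) * (s - 273 / 1000) ^ 3 := mul_nonneg (by linarith) (by positivity)
  have p4 : (0:ℝ) ≤ (π - 3.141592) * (s - 273 / 1000) ^ 4 := mul_nonneg (by linarith) (by positivity)
  have q4 : (0:ℝ) ≤ (3.141593 - π) * (s - 273 / 1000) ^ 4 := mul_nonneg (by linarith) (by positivity)
  have p5 : (0:ℝ) ≤ (π - 3.141592) * (s - 273 / 1000) ^ 5 := mul_nonneg (by linarith) (by positivity)
  have q5 : (0:ℝ) ≤ (3.141593 - π) * (s - 273 / 1000) ^ 5 := mul_nonneg (by linarith) (by positivity)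
  have p6 : (0:ℝ) ≤ (π - 3.141592) * (s - 273 / 1000) ^ 6 := mul_nonneg (by linarith) (by positivity)
  have q6 : (0:ℝ) ≤ (3.141593 - π) * (s - 273 / 1000) ^ 6 := mul_nonneg (by linarith) (by positivity)
  have hB3 : (0:ℝ) < (-4 + π) + (-(649 / 15) + 380 * π / 27) * s
        + (-(2191 / 15) + 1304 * π / 27) * s ^ 2 + (-(2639 / 12) + 875 * π / 12) * s ^ 3
        + (-(9931 / 60) + 659 * π / 12) * s ^ 4 + (-(7301 / 120) + 4361 * π / 216) * s ^ 5
        + (-(1043 / 120) + 623 * π / 216) * s ^ 6 := by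
    linarith [pow_nonneg ht 2, pow_nonneg ht 3, pow_nonneg ht 4, pow_nonneg ht 5,
      pow_nonneg ht 6, p1, p2, p3, p4, p5, p6, q1, q2, q3, q4, q5, q6, ht]
  have h3 : (0:ℝ) < (1 - s) ^ 3 := pow_pos (by linarith) 3
  linarith [mul_pos h3 hB3, key]

private lemma algUp4 {s : ℝ} (h0 : 0 < s) (h2 : s ^ 2 < 16711 / 250000) :
    s * (2 + s) ^ 2 * ((1 - π / 3)
      + (1 / 2 - π / 6) * (1 - s ^ 2) + (3 / 8 - 25 * π / 216) * (1 - s ^ 2) ^ 2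
      + (-(1043 / 120) + 623 * π / 216) * (1 - s ^ 2) ^ 3) < (2 + s) ^ 2 - π * (1 + 2 * s) := by
  have hpu := Real.pi_lt_d6
  have hpl := Real.pi_gt_d6
  have hu : s ≤ 2586 / 10000 := by nlinarith
  have key : (2 + s) ^ 2 - π * (1 + 2 * s) - s * (2 + s) ^ 2 * ((1 - π / 3)
      + (1 / 2 - π / 6) * (1 - s ^ 2) + (3 / 8 - 25 * π / 216) * (1 - s ^ 2) ^ 2
      + (-(1043 / 120) + 623 * π / 216) * (1 - s ^ 2) ^ 3)
      = (1 - s) ^ 3 * ((4 - π) + (649 / 15 - 380 * π / 27) * s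
        + (2191 / 15 - 1304 * π / 27) * s ^ 2 + (2639 / 12 - 875 * π / 12) * s ^ 3
        + (9931 / 60 - 659 * π / 12) * s ^ 4 + (7301 / 120 - 4361 * π / 216) * s ^ 5
        + (1043 / 120 - 623 * π / 216) * s ^ 6) := by ring
  have c0 : (0:ℝ) ≤ (2586 / 10000 - s) := by linarith
  have c1 : (0:ℝ) ≤ (2586 / 10000 - s) * s := mul_nonneg c0 h0.le
  have c2 : (0:ℝ) ≤ (2586 / 10000 - s) * s ^ 2 := mul_nonneg c0 (by positivity)
  have c3 : (0:ℝ) ≤ (2586 / 10000 - s) * s ^ 3 := mul_nonneg c0 (by positivity)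
  have c4 : (0:ℝ) ≤ (2586 / 10000 - s) * s ^ 4 := mul_nonneg c0 (by positivity)
  have c5 : (0:ℝ) ≤ (2586 / 10000 - s) * s ^ 5 := mul_nonneg c0 (by positivity)
  have d1 : (0:ℝ) ≤ (π - 3.141592) * s := mul_nonneg (by linarith) h0.le
  have d2 : (0:ℝ) ≤ (π - 3.141592) * s ^ 2 := mul_nonneg (by linarith) (by positivity)
  have d3 : (0:ℝ) ≤ (π - 3.141592) * s ^ 3 := mul_nonneg (by linarith) (by positivity)
  have d4 : (0:ℝ) ≤ (π - 3.141592) * s ^ 4 := mul_nonneg (by linarith) (by positivity)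
  have d5 : (0:ℝ) ≤ (π - 3.141592) * s ^ 5 := mul_nonneg (by linarith) (by positivity)
  have d6 : (0:ℝ) ≤ (π - 3.141592) * s ^ 6 := mul_nonneg (by linarith) (by positivity)
  have f1 : (0:ℝ) ≤ (3.141593 - π) * s := mul_nonneg (by linarith) h0.le
  have f2 : (0:ℝ) ≤ (3.141593 - π) * s ^ 2 := mul_nonneg (by linarith) (by positivity)
  have f3 : (0:ℝ) ≤ (3.141593 - π) * s ^ 3 := mul_nonneg (by linarith) (by positivity)
  have f4 : (0:ℝ) ≤ (3.141593 - π) * s ^ 4 := mul_nonneg (by linarith) (by positivity)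
  have f5 : (0:ℝ) ≤ (3.141593 - π) * s ^ 5 := mul_nonneg (by linarith) (by positivity)
  have f6 : (0:ℝ) ≤ (3.141593 - π) * s ^ 6 := mul_nonneg (by linarith) (by positivity)
  have hB3 : (0:ℝ) < (4 - π) + (649 / 15 - 380 * π / 27) * s
        + (2191 / 15 - 1304 * π / 27) * s ^ 2 + (2639 / 12 - 875 * π / 12) * s ^ 3
        + (9931 / 60 - 659 * π / 12) * s ^ 4 + (7301 / 120 - 4361 * π / 216) * s ^ 5
        + (1043 / 120 - 623 * π / 216) * s ^ 6 := by
    linarith [h0.le, pow_nonneg h0.le 2, pow_nonneg h0.le 3, pow_nonneg h0.le 4,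
      pow_nonneg h0.le 5, pow_nonneg h0.le 6,
      c0, c1, c2, c3, c4, c5, d1, d2, d3, d4, d5, d6, f1, f2, f3, f4, f5, f6]
  have h3 : (0:ℝ) < (1 - s) ^ 3 := pow_pos (by linarith) 3
  linarith [mul_pos h3 hB3, key]

private lemma algUp2 {s : ℝ} (h0 : 0 < s) (hl : 18639 / 250000 ≤ s ^ 2)
    (hu : s ^ 2 ≤ 19 / 100) :
    (2 + s) ^ 2 - π * (1 + 2 * s) + s * (2 + s) ^ 2 * (1 / 100)
      ≤ s * (2 + s) ^ 2 * ((1 - π / 3)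
      + (1 / 2 - π / 6) * (1 - s ^ 2) + (3 / 8 - 25 * π / 216) * (1 - s ^ 2) ^ 2
      + (-(1043 / 120) + 623 * π / 216) * (1 - s ^ 2) ^ 3) := by
  have hpu := Real.pi_lt_d6
  have hpl := Real.pi_gt_d6
  have hls : (273 / 1000 : ℝ) ≤ s := by nlinarith
  have hus : s ≤ 436 / 1000 := by nlinarith
  have ht : (0:ℝ) ≤ s - 273 / 1000 := by linarith
  have c0 : (0:ℝ) ≤ (436 / 1000 - s) := (by linarith : (0:ℝ) ≤ 436 / 1000 - s)
  have c1 : (0:ℝ) ≤ (436 / 1000 - s) * (s - 273 / 1000) := mul_nonneg (by linarith) ht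
  have c2 : (0:ℝ) ≤ (436 / 1000 - s) * (s - 273 / 1000) ^ 2 := mul_nonneg (by linarith) (pow_nonneg ht 2)
  have c3 : (0:ℝ) ≤ (436 / 1000 - s) * (s - 273 / 1000) ^ 3 := mul_nonneg (by linarith) (pow_nonneg ht 3)
  have c4 : (0:ℝ) ≤ (436 / 1000 - s) * (s - 273 / 1000) ^ 4 := mul_nonneg (by linarith) (pow_nonneg ht 4)
  have c5 : (0:ℝ) ≤ (436 / 1000 - s) * (s - 273 / 1000) ^ 5 := mul_nonneg (by linarith) (pow_nonneg ht 5)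
  have c6 : (0:ℝ) ≤ (436 / 1000 - s) * (s - 273 / 1000) ^ 6 := mul_nonneg (by linarith) (pow_nonneg ht 6)
  have c7 : (0:ℝ) ≤ (436 / 1000 - s) * (s - 273 / 1000) ^ 7 := mul_nonneg (by linarith) (pow_nonneg ht 7)
  have c8 : (0:ℝ) ≤ (436 / 1000 - s) * (s - 273 / 1000) ^ 8 := mul_nonneg (by linarith) (pow_nonneg ht 8)
  have d1 : (0:ℝ) ≤ (π - 3.141592) * (s - 273 / 1000) := mul_nonneg (by linarith) ht
  have f1 : (0:ℝ) ≤ (3.141593 - π) * (s - 273 / 1000) := mul_nonneg (by linarith) ht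
  have d2 : (0:ℝ) ≤ (π - 3.141592) * (s - 273 / 1000) ^ 2 := mul_nonneg (by linarith) (pow_nonneg ht 2)
  have f2 : (0:ℝ) ≤ (3.141593 - π) * (s - 273 / 1000) ^ 2 := mul_nonneg (by linarith) (pow_nonneg ht 2)
  have d3 : (0:ℝ) ≤ (π - 3.141592) * (s - 273 / 1000) ^ 3 := mul_nonneg (by linarith) (pow_nonneg ht 3)
  have f3 : (0:ℝ) ≤ (3.141593 - π) * (s - 273 / 1000) ^ 3 := mul_nonneg (by linarith) (pow_nonneg ht 3)
  have d4 : (0:ℝ) ≤ (π - 3.141592) * (s - 273 / 1000) ^ 4 := mul_nonneg (by linarith) (pow_nonneg ht 4)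
  have f4 : (0:ℝ) ≤ (3.141593 - π) * (s - 273 / 1000) ^ 4 := mul_nonneg (by linarith) (pow_nonneg ht 4)
  have d5 : (0:ℝ) ≤ (π - 3.141592) * (s - 273 / 1000) ^ 5 := mul_nonneg (by linarith) (pow_nonneg ht 5)
  have f5 : (0:ℝ) ≤ (3.141593 - π) * (s - 273 / 1000) ^ 5 := mul_nonneg (by linarith) (pow_nonneg ht 5)
  have d6 : (0:ℝ) ≤ (π - 3.141592) * (s - 273 / 1000) ^ 6 := mul_nonneg (by linarith) (pow_nonneg ht 6)
  have f6 : (0:ℝ) ≤ (3.141593 - π) * (s - 273 / 1000) ^ 6 := mul_nonneg (by linarith) (pow_nonneg ht 6)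
  have d7 : (0:ℝ) ≤ (π - 3.141592) * (s - 273 / 1000) ^ 7 := mul_nonneg (by linarith) (pow_nonneg ht 7)
  have f7 : (0:ℝ) ≤ (3.141593 - π) * (s - 273 / 1000) ^ 7 := mul_nonneg (by linarith) (pow_nonneg ht 7)
  have d8 : (0:ℝ) ≤ (π - 3.141592) * (s - 273 / 1000) ^ 8 := mul_nonneg (by linarith) (pow_nonneg ht 8)
  have f8 : (0:ℝ) ≤ (3.141593 - π) * (s - 273 / 1000) ^ 8 := mul_nonneg (by linarith) (pow_nonneg ht 8)
  have d9 : (0:ℝ) ≤ (π - 3.141592) * (s - 273 / 1000) ^ 9 := mul_nonneg (by linarith) (pow_nonneg ht 9)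
  have f9 : (0:ℝ) ≤ (3.141593 - π) * (s - 273 / 1000) ^ 9 := mul_nonneg (by linarith) (pow_nonneg ht 9)
  linarith [c0, c1, c2, c3, c4, c5, c6, c7, c8, d1, f1, d2, f2, d3, f3, d4, f4, d5, f5, d6, f6, d7, f7, d8, f8, d9, f9, pow_nonneg ht 2, pow_nonneg ht 3, pow_nonneg ht 4, pow_nonneg ht 5, pow_nonneg ht 6, pow_nonneg ht 7, pow_nonneg ht 8, pow_nonneg ht 9, ht]

private lemma algUp3 {s : ℝ} (h0 : 0 < s) (hl : 16711 / 250000 ≤ s ^ 2)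
    (hu : s ^ 2 ≤ 18639 / 250000) :
    (2 + s) ^ 2 - π * (1 + 2 * s) - s * (2 + s) ^ 2 * (1 / 50)
      ≤ s * (2 + s) ^ 2 * ((1 - π / 3)
      + (1 / 2 - π / 6) * (1 - s ^ 2) + (3 / 8 - 25 * π / 216) * (1 - s ^ 2) ^ 2
      + (-(1043 / 120) + 623 * π / 216) * (1 - s ^ 2) ^ 3) := by
  have hpu := Real.pi_lt_d6
  have hpl := Real.pi_gt_d6
  have hls : (2585 / 10000 : ℝ) ≤ s := by nlinarith
  have hus : s ≤ 27305 / 100000 := by nlinarith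
  have ht : (0:ℝ) ≤ s - 2585 / 10000 := by linarith
  have c0 : (0:ℝ) ≤ (27305 / 100000 - s) := (by linarith : (0:ℝ) ≤ 27305 / 100000 - s)
  have c1 : (0:ℝ) ≤ (27305 / 100000 - s) * (s - 2585 / 10000) := mul_nonneg (by linarith) ht
  have c2 : (0:ℝ) ≤ (27305 / 100000 - s) * (s - 2585 / 10000) ^ 2 := mul_nonneg (by linarith) (pow_nonneg ht 2)
  have c3 : (0:ℝ) ≤ (27305 / 100000 - s) * (s - 2585 / 10000) ^ 3 := mul_nonneg (by linarith) (pow_nonneg ht 3)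
  have c4 : (0:ℝ) ≤ (27305 / 100000 - s) * (s - 2585 / 10000) ^ 4 := mul_nonneg (by linarith) (pow_nonneg ht 4)
  have c5 : (0:ℝ) ≤ (27305 / 100000 - s) * (s - 2585 / 10000) ^ 5 := mul_nonneg (by linarith) (pow_nonneg ht 5)
  have c6 : (0:ℝ) ≤ (27305 / 100000 - s) * (s - 2585 / 10000) ^ 6 := mul_nonneg (by linarith) (pow_nonneg ht 6)
  have c7 : (0:ℝ) ≤ (27305 / 100000 - s) * (s - 2585 / 10000) ^ 7 := mul_nonneg (by linarith) (pow_nonneg ht 7)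
  have c8 : (0:ℝ) ≤ (27305 / 100000 - s) * (s - 2585 / 10000) ^ 8 := mul_nonneg (by linarith) (pow_nonneg ht 8)
  have d1 : (0:ℝ) ≤ (π - 3.141592) * (s - 2585 / 10000) := mul_nonneg (by linarith) ht
  have f1 : (0:ℝ) ≤ (3.141593 - π) * (s - 2585 / 10000) := mul_nonneg (by linarith) ht
  have d2 : (0:ℝ) ≤ (π - 3.141592) * (s - 2585 / 10000) ^ 2 := mul_nonneg (by linarith) (pow_nonneg ht 2)
  have f2 : (0:ℝ) ≤ (3.141593 - π) * (s - 2585 / 10000) ^ 2 := mul_nonneg (by linarith) (pow_nonneg ht 2)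
  have d3 : (0:ℝ) ≤ (π - 3.141592) * (s - 2585 / 10000) ^ 3 := mul_nonneg (by linarith) (pow_nonneg ht 3)
  have f3 : (0:ℝ) ≤ (3.141593 - π) * (s - 2585 / 10000) ^ 3 := mul_nonneg (by linarith) (pow_nonneg ht 3)
  have d4 : (0:ℝ) ≤ (π - 3.141592) * (s - 2585 / 10000) ^ 4 := mul_nonneg (by linarith) (pow_nonneg ht 4)
  have f4 : (0:ℝ) ≤ (3.141593 - π) * (s - 2585 / 10000) ^ 4 := mul_nonneg (by linarith) (pow_nonneg ht 4)
  have d5 : (0:ℝ) ≤ (π - 3.141592) * (s - 2585 / 10000) ^ 5 := mul_nonneg (by linarith) (pow_nonneg ht 5)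
  have f5 : (0:ℝ) ≤ (3.141593 - π) * (s - 2585 / 10000) ^ 5 := mul_nonneg (by linarith) (pow_nonneg ht 5)
  have d6 : (0:ℝ) ≤ (π - 3.141592) * (s - 2585 / 10000) ^ 6 := mul_nonneg (by linarith) (pow_nonneg ht 6)
  have f6 : (0:ℝ) ≤ (3.141593 - π) * (s - 2585 / 10000) ^ 6 := mul_nonneg (by linarith) (pow_nonneg ht 6)
  have d7 : (0:ℝ) ≤ (π - 3.141592) * (s - 2585 / 10000) ^ 7 := mul_nonneg (by linarith) (pow_nonneg ht 7)
  have f7 : (0:ℝ) ≤ (3.141593 - π) * (s - 2585 / 10000) ^ 7 := mul_nonneg (by linarith) (pow_nonneg ht 7)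
  have d8 : (0:ℝ) ≤ (π - 3.141592) * (s - 2585 / 10000) ^ 8 := mul_nonneg (by linarith) (pow_nonneg ht 8)
  have f8 : (0:ℝ) ≤ (3.141593 - π) * (s - 2585 / 10000) ^ 8 := mul_nonneg (by linarith) (pow_nonneg ht 8)
  have d9 : (0:ℝ) ≤ (π - 3.141592) * (s - 2585 / 10000) ^ 9 := mul_nonneg (by linarith) (pow_nonneg ht 9)
  have f9 : (0:ℝ) ≤ (3.141593 - π) * (s - 2585 / 10000) ^ 9 := mul_nonneg (by linarith) (pow_nonneg ht 9)
  linarith [c0, c1, c2, c3, c4, c5, c6, c7, c8, d1, f1, d2, f2, d3, f3, d4, f4, d5, f5, d6, f6, d7, f7, d8, f8, d9, f9, pow_nonneg ht 2, pow_nonneg ht 3, pow_nonneg ht 4, pow_nonneg ht 5, pow_nonneg ht 6, pow_nonneg ht 7, pow_nonneg ht 8, pow_nonneg ht 9, ht]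

noncomputable def KKf : ℝ → ℝ := fun t =>
  (1 - π / 3) * t + (1 / 6 - π / 18) * t ^ 3 + (3 / 40 - 5 * π / 216) * t ^ 5
    + (-(149 / 120) + 89 * π / 216) * t ^ 7
    - (Real.arcsin t - π * t / (2 + Real.sqrt (1 - t ^ 2)))

lemma KKf_cont : Continuous KKf := by
  unfold KKf
  apply Continuous.sub
  · continuity
  · apply Real.continuous_arcsin.sub
    apply Continuous.div (by continuity) (by continuity)
    intro t
    positivity

lemma KKf_zero : KKf 0 = 0 := by
  unfold KKf
  norm_num [Real.arcsin_zero]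

lemma KKf_one : KKf 1 = 0 := by
  unfold KKf
  rw [show (1:ℝ) - 1 ^ 2 = 0 by norm_num, Real.sqrt_zero, Real.arcsin_one]
  ring

lemma KKf_hasDeriv {y : ℝ} (h0 : 0 < y) (h1 : y < 1) :
    HasDerivAt KKf
      ((1 - π / 3)
        + (1 / 2 - π / 6) * (1 - (Real.sqrt (1 - y ^ 2)) ^ 2)
        + (3 / 8 - 25 * π / 216) * (1 - (Real.sqrt (1 - y ^ 2)) ^ 2) ^ 2
        + (-(1043 / 120) + 623 * π / 216) * (1 - (Real.sqrt (1 - y ^ 2)) ^ 2) ^ 3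
        - ((2 + Real.sqrt (1 - y ^ 2)) ^ 2 - π * (1 + 2 * Real.sqrt (1 - y ^ 2)))
          / (Real.sqrt (1 - y ^ 2) * (2 + Real.sqrt (1 - y ^ 2)) ^ 2)) y := by
  have hq : (0:ℝ) < 1 - y ^ 2 := by nlinarith
  have hs2 : (Real.sqrt (1 - y ^ 2)) ^ 2 = 1 - y ^ 2 := Real.sq_sqrt hq.le
  have hp := poly_hasDeriv (1 - π / 3) (1 / 6 - π / 18) (3 / 40 - 5 * π / 216)
    (-(149 / 120) + 89 * π / 216) y
  have htot := hp.sub (core_hasDeriv h0 h1)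
  convert htot using 1
  case e'_4 => rfl
  case e'_5 => rfl
  case e'_8 => rfl
  rw [hs2]
  ring

-- strict monotonicity of KKf on [0, b] for b ≤ 481/500
lemma KKf_mono {b : ℝ} (hb : b ≤ 481 / 500) (hb0 : 0 < b) :
    StrictMonoOn KKf (Set.Icc 0 b) := by
  apply strictMonoOn_of_deriv_pos (convex_Icc 0 b) KKf_cont.continuousOn
  intro y hy
  rw [interior_Icc] at hy
  obtain ⟨hy0, hyb⟩ := hy
  have hy1 : y < 1 := by linarith [hb, hyb]
  rw [(KKf_hasDeriv hy0 hy1).deriv]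
  have hq : (0:ℝ) < 1 - y ^ 2 := by nlinarith
  set s := Real.sqrt (1 - y ^ 2) with hs
  have hs0 : 0 < s := Real.sqrt_pos.mpr hq
  have hs2 : s ^ 2 = 1 - y ^ 2 := Real.sq_sqrt hq.le
  have hs1 : s < 1 := by nlinarith
  have hsl : 18639 / 250000 < s ^ 2 := by nlinarith
  have halg := algUp1 hs0 hs1 hsl
  have hW : (0:ℝ) < s * (2 + s) ^ 2 := by positivity
  rw [sub_pos, div_lt_iff₀ hW]
  nlinarith [halg, hs2]

lemma KKf_anti {a : ℝ} (ha : 483 / 500 ≤ a) (ha1 : a < 1) :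
    StrictAntiOn KKf (Set.Icc a 1) := by
  apply strictAntiOn_of_deriv_neg (convex_Icc a 1) KKf_cont.continuousOn
  intro y hy
  rw [interior_Icc] at hy
  obtain ⟨hya, hy1⟩ := hy
  have hy0 : 0 < y := by linarith
  rw [(KKf_hasDeriv hy0 hy1).deriv]
  have hq : (0:ℝ) < 1 - y ^ 2 := by nlinarith
  set s := Real.sqrt (1 - y ^ 2) with hs
  have hs0 : 0 < s := Real.sqrt_pos.mpr hq
  have hs2 : s ^ 2 = 1 - y ^ 2 := Real.sq_sqrt hq.le
  have hsu : s ^ 2 < 16711 / 250000 := by nlinarith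
  have halg := algUp4 hs0 hsu
  have hW : (0:ℝ) < s * (2 + s) ^ 2 := by positivity
  rw [sub_neg, lt_div_iff₀ hW]
  nlinarith [halg]

lemma KKf_mid1 : MonotoneOn (fun t => KKf t - t / 100) (Set.Icc (9/10 : ℝ) (481/500)) := by
  apply monotoneOn_of_deriv_nonneg (convex_Icc _ _)
    ((KKf_cont.sub (by continuity)).continuousOn)
  · intro y hy
    rw [interior_Icc] at hy
    have hD : HasDerivAt (fun t : ℝ => KKf t - t / 100) _ y :=
      (KKf_hasDeriv (by linarith [hy.1] : (0:ℝ) < y) (by linarith [hy.2] : y < 1)).sub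
        (by simpa using (hasDerivAt_id y).div_const 100 : HasDerivAt (fun t : ℝ => t / 100) (1/100) y)
    exact hD.differentiableAt.differentiableWithinAt
  · intro y hy
    rw [interior_Icc] at hy
    obtain ⟨hya, hyb⟩ := hy
    have hy0 : (0:ℝ) < y := by linarith
    have hy1 : y < 1 := by linarith
    have hD := (KKf_hasDeriv hy0 hy1).sub (by simpa using (hasDerivAt_id y).div_const 100 : HasDerivAt (fun t : ℝ => t / 100) (1/100) y)
    rw [hD.deriv]
    have hq : (0:ℝ) < 1 - y ^ 2 := by nlinarith
    set s := Real.sqrt (1 - y ^ 2) with hs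
    have hs0 : 0 < s := Real.sqrt_pos.mpr hq
    have hs2 : s ^ 2 = 1 - y ^ 2 := Real.sq_sqrt hq.le
    have hskl : 18639 / 250000 ≤ s ^ 2 := by nlinarith
    have hsku : s ^ 2 ≤ 19 / 100 := by nlinarith
    have halg := algUp2 hs0 hskl hsku
    have hW : (0:ℝ) < s * (2 + s) ^ 2 := by positivity
    have h' : ((2 + s) ^ 2 - π * (1 + 2 * s)) / (s * (2 + s) ^ 2)
        ≤ ((1 - π / 3)
        + (1 / 2 - π / 6) * (1 - s ^ 2) + (3 / 8 - 25 * π / 216) * (1 - s ^ 2) ^ 2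
        + (-(1043 / 120) + 623 * π / 216) * (1 - s ^ 2) ^ 3) - 1 / 100 := by
      rw [div_le_iff₀ hW]
      nlinarith [halg]
    linarith [h']

lemma KKf_mid2 : MonotoneOn (fun t => KKf t + t / 50) (Set.Icc (481/500 : ℝ) (483/500)) := by
  apply monotoneOn_of_deriv_nonneg (convex_Icc _ _)
    ((KKf_cont.add (by continuity)).continuousOn)
  · intro y hy
    rw [interior_Icc] at hy
    have hD : HasDerivAt (fun t : ℝ => KKf t + t / 50) _ y :=
      (KKf_hasDeriv (by linarith [hy.1] : (0:ℝ) < y) (by linarith [hy.2] : y < 1)).add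
        (by simpa using (hasDerivAt_id y).div_const 50 : HasDerivAt (fun t : ℝ => t / 50) (1/50) y)
    exact hD.differentiableAt.differentiableWithinAt
  · intro y hy
    rw [interior_Icc] at hy
    obtain ⟨hya, hyb⟩ := hy
    have hy0 : (0:ℝ) < y := by linarith
    have hy1 : y < 1 := by linarith
    have hD := (KKf_hasDeriv hy0 hy1).add
      (by simpa using (hasDerivAt_id y).div_const 50 : HasDerivAt (fun t : ℝ => t / 50) (1/50) y)
    rw [hD.deriv]
    have hq : (0:ℝ) < 1 - y ^ 2 := by nlinarith
    set s := Real.sqrt (1 - y ^ 2) with hs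
    have hs0 : 0 < s := Real.sqrt_pos.mpr hq
    have hs2 : s ^ 2 = 1 - y ^ 2 := Real.sq_sqrt hq.le
    have hskl : 16711 / 250000 ≤ s ^ 2 := by nlinarith
    have hsku : s ^ 2 ≤ 18639 / 250000 := by nlinarith
    have halg := algUp3 hs0 hskl hsku
    have hW : (0:ℝ) < s * (2 + s) ^ 2 := by positivity
    have h' : ((2 + s) ^ 2 - π * (1 + 2 * s)) / (s * (2 + s) ^ 2)
        ≤ ((1 - π / 3)
        + (1 / 2 - π / 6) * (1 - s ^ 2) + (3 / 8 - 25 * π / 216) * (1 - s ^ 2) ^ 2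
        + (-(1043 / 120) + 623 * π / 216) * (1 - s ^ 2) ^ 3) + 1 / 50 := by
      rw [div_le_iff₀ hW]
      nlinarith [halg]
    linarith [h']

lemma KKf_pos {x : ℝ} (hx0 : 0 < x) (hx1 : x < 1) : 0 < KKf x := by
  rcases le_or_gt x (481/500) with h | h
  · have := (KKf_mono (le_refl (481/500 : ℝ)) (by norm_num)) (Set.mem_Icc.mpr ⟨le_rfl, by norm_num⟩)
      (Set.mem_Icc.mpr ⟨hx0.le, h⟩) hx0
    rwa [KKf_zero] at this
  · rcases le_or_gt x (483/500) with h' | h'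
    · have hK9 : 0 < KKf (9/10) := by
        have := (KKf_mono (by norm_num : (9/10:ℝ) ≤ 481/500) (by norm_num))
          (Set.mem_Icc.mpr ⟨le_rfl, by norm_num⟩) (Set.mem_Icc.mpr ⟨by norm_num, le_rfl⟩)
          (by norm_num)
        rwa [KKf_zero] at this
      have e1 := KKf_mid1 (Set.mem_Icc.mpr ⟨le_rfl, by norm_num⟩)
        (Set.mem_Icc.mpr ⟨by norm_num, le_rfl⟩) (by norm_num)
      have e2 := KKf_mid2 (Set.mem_Icc.mpr ⟨le_rfl, by norm_num⟩)
        (Set.mem_Icc.mpr ⟨h.le, h'⟩) h.le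
      simp only at e1 e2
      linarith [e1, e2, hK9]
    · have := (KKf_anti h'.le hx1) (Set.mem_Icc.mpr ⟨le_rfl, hx1.le⟩)
        (Set.mem_Icc.mpr ⟨hx1.le, le_rfl⟩) hx1
      rwa [KKf_one] at this

noncomputable def FFf : ℝ → ℝ := fun t =>
  Real.arcsin t - π * t / (2 + Real.sqrt (1 - t ^ 2))
    - ((1 - π / 3) * t + (1 / 6 - π / 18) * t ^ 3 + (3 / 40 - 5 * π / 216) * t ^ 5
      + (5 / 112 - 17 * π / 1296) * t ^ 7)

lemma FFf_cont : Continuous FFf := by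
  unfold FFf
  apply Continuous.sub
  · apply Real.continuous_arcsin.sub
    apply Continuous.div (by continuity) (by continuity)
    intro t
    positivity
  · continuity

lemma FFf_zero : FFf 0 = 0 := by
  unfold FFf
  norm_num [Real.arcsin_zero]

lemma FFf_hasDeriv {y : ℝ} (h0 : 0 < y) (h1 : y < 1) :
    HasDerivAt FFf
      (((2 + Real.sqrt (1 - y ^ 2)) ^ 2 - π * (1 + 2 * Real.sqrt (1 - y ^ 2)))
          / (Real.sqrt (1 - y ^ 2) * (2 + Real.sqrt (1 - y ^ 2)) ^ 2)
        - ((1 - π / 3)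
          + (1 / 2 - π / 6) * (1 - (Real.sqrt (1 - y ^ 2)) ^ 2)
          + (3 / 8 - 25 * π / 216) * (1 - (Real.sqrt (1 - y ^ 2)) ^ 2) ^ 2
          + (5 / 16 - 119 * π / 1296) * (1 - (Real.sqrt (1 - y ^ 2)) ^ 2) ^ 3)) y := by
  have hq : (0:ℝ) < 1 - y ^ 2 := by nlinarith
  have hs2 : (Real.sqrt (1 - y ^ 2)) ^ 2 = 1 - y ^ 2 := Real.sq_sqrt hq.le
  have hp := poly_hasDeriv (1 - π / 3) (1 / 6 - π / 18) (3 / 40 - 5 * π / 216)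
    (5 / 112 - 17 * π / 1296) y
  have htot := (core_hasDeriv h0 h1).sub hp
  convert htot using 1
  case e'_4 => rfl
  case e'_5 => rfl
  case e'_8 => rfl
  rw [hs2]
  ring

lemma FFf_pos {x : ℝ} (hx0 : 0 < x) (hx1 : x < 1) : 0 < FFf x := by
  have hmono : StrictMonoOn FFf (Set.Icc 0 x) := by
    apply strictMonoOn_of_deriv_pos (convex_Icc 0 x) FFf_cont.continuousOn
    intro y hy
    rw [interior_Icc] at hy
    obtain ⟨hy0, hyx⟩ := hy
    have hy1 : y < 1 := lt_trans hyx hx1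
    rw [(FFf_hasDeriv hy0 hy1).deriv]
    have hq : (0:ℝ) < 1 - y ^ 2 := by nlinarith
    set s := Real.sqrt (1 - y ^ 2) with hs
    have hs0 : 0 < s := Real.sqrt_pos.mpr hq
    have hs2 : s ^ 2 = 1 - y ^ 2 := Real.sq_sqrt hq.le
    have hs1 : s < 1 := by nlinarith
    have halg := algLow hs0 hs1
    have hW : (0:ℝ) < s * (2 + s) ^ 2 := by positivity
    rw [sub_pos, lt_div_iff₀ hW]
    nlinarith [halg]
  have := hmono (Set.mem_Icc.mpr ⟨le_rfl, hx0.le⟩) (Set.mem_Icc.mpr ⟨hx0.le, le_rfl⟩) hx0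
  rwa [FFf_zero] at this

theorem shaferPi_n3 (x : ℝ) (hx : x ∈ Set.Ioo (0 : ℝ) 1) :
    (1 - π / 3) * x + (1 / 6 - π / 18) * x ^ 3 + (3 / 40 - 5 * π / 216) * x ^ 5
        + (5 / 112 - 17 * π / 1296) * x ^ 7
      < Real.arcsin x - π * x / (2 + Real.sqrt (1 - x ^ 2)) ∧
    Real.arcsin x - π * x / (2 + Real.sqrt (1 - x ^ 2))
      < (1 - π / 3) * x + (1 / 6 - π / 18) * x ^ 3 + (3 / 40 - 5 * π / 216) * x ^ 5
        + (-(149 / 120) + 89 * π / 216) * x ^ 7 := by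
  obtain ⟨hx0, hx1⟩ := hx
  have h1 := FFf_pos hx0 hx1
  have h2 := KKf_pos hx0 hx1
  unfold FFf at h1
  unfold KKf at h2
  constructor <;> linarith
end

section
/- For every x ∈ (0,1): (1−π/3)·x + (1/6−π/18)·x³ + (3/40−5π/216)·x⁵ + (5/112−17π/1296)·x⁷ + (35/1152−269π/31104)·x⁹ + (63/2816−1163π/186624)·x¹¹ < arcsin x − πx/(2+√(1−x²)) < (1−π/3)·x + (1/6−π/18)·x³ + (3/40−5π/216)·x⁵ + (5/112−17π/1296)·x⁷ + (35/1152−269π/31104)·x⁹ + (−53089/40320 + 13493π/31104)·x¹¹. -/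
set_option maxHeartbeats 1000000


open Real

noncomputable def U9 (x : ℝ) : ℝ :=
  (1 - π / 3) * x + (1 / 6 - π / 18) * x ^ 3 + (3 / 40 - 5 * π / 216) * x ^ 5
    + (5 / 112 - 17 * π / 1296) * x ^ 7 + (35 / 1152 - 269 * π / 31104) * x ^ 9

noncomputable def U9d (x : ℝ) : ℝ :=
  (1 - π / 3) + 3 * (1 / 6 - π / 18) * x ^ 2 + 5 * (3 / 40 - 5 * π / 216) * x ^ 4
    + 7 * (5 / 112 - 17 * π / 1296) * x ^ 6 + 9 * (35 / 1152 - 269 * π / 31104) * x ^ 8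

noncomputable def U9dd (x : ℝ) : ℝ :=
  6 * (1 / 6 - π / 18) * x + 20 * (3 / 40 - 5 * π / 216) * x ^ 3
    + 42 * (5 / 112 - 17 * π / 1296) * x ^ 5 + 72 * (35 / 1152 - 269 * π / 31104) * x ^ 7

noncomputable def Nf (x : ℝ) : ℝ := arcsin x - π * x / (2 + Real.sqrt (1 - x ^ 2)) - U9 x

noncomputable def NP (x : ℝ) : ℝ :=
  1 / Real.sqrt (1 - x ^ 2)
    - π * (2 * Real.sqrt (1 - x ^ 2) + 1)
        / (Real.sqrt (1 - x ^ 2) * (2 + Real.sqrt (1 - x ^ 2)) ^ 2)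
    - U9d x

noncomputable def NPP (x : ℝ) : ℝ :=
  x / Real.sqrt (1 - x ^ 2) ^ 3
    - π * x * (4 * Real.sqrt (1 - x ^ 2) ^ 2 + 3 * Real.sqrt (1 - x ^ 2) + 2)
        / (Real.sqrt (1 - x ^ 2) ^ 3 * (2 + Real.sqrt (1 - x ^ 2)) ^ 3)
    - U9dd x

lemma pi_ub : π < 3141593 / 1000000 := by
  have h := Real.pi_lt_d6
  norm_num at h ⊢
  linarith

lemma key1 (s x : ℝ) (hs0 : 0 < s) (hs1 : s < 1) (hx2 : x ^ 2 = 1 - s ^ 2) :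
    0 < (2 + s) ^ 2 - π * (2 * s + 1) - s * (2 + s) ^ 2 *
      ((1 - π / 3) + 3 * (1 / 6 - π / 18) * x ^ 2 + 5 * (3 / 40 - 5 * π / 216) * x ^ 4
        + 7 * (5 / 112 - 17 * π / 1296) * x ^ 6 + 9 * (35 / 1152 - 269 * π / 31104) * x ^ 8
        + 11 * (63 / 2816 - 1163 * π / 186624) * x ^ 10) := by
  have hx4 : x ^ 4 = (1 - s ^ 2) ^ 2 := by rw [show x ^ 4 = (x ^ 2) ^ 2 by ring, hx2]
  have hx6 : x ^ 6 = (1 - s ^ 2) ^ 3 := by rw [show x ^ 6 = (x ^ 2) ^ 3 by ring, hx2]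
  have hx8 : x ^ 8 = (1 - s ^ 2) ^ 4 := by rw [show x ^ 8 = (x ^ 2) ^ 4 by ring, hx2]
  have hx10 : x ^ 10 = (1 - s ^ 2) ^ 5 := by rw [show x ^ 10 = (x ^ 2) ^ 5 by ring, hx2]
  rw [hx10, hx8, hx6, hx4, hx2]
  have e : (2 + s) ^ 2 - π * (2 * s + 1) - s * (2 + s) ^ 2 *
      ((1 - π / 3) + 3 * (1 / 6 - π / 18) * (1 - s ^ 2) + 5 * (3 / 40 - 5 * π / 216) * (1 - s ^ 2) ^ 2
        + 7 * (5 / 112 - 17 * π / 1296) * (1 - s ^ 2) ^ 3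
        + 9 * (35 / 1152 - 269 * π / 31104) * (1 - s ^ 2) ^ 4
        + 11 * (63 / 2816 - 1163 * π / 186624) * (1 - s ^ 2) ^ 5)
      = (1 - s) ^ 6 * ((858407/1000000) + (129243947567/46656000000)*s
          + (216841382153/46656000000)*s^2 + (903284308111/186624000000)*s^3
          + (100003380799/31104000000)*s^4 + (123507606481/93312000000)*s^5
          + (5736600751/18662400000)*s^6 + (5736600751/186624000000)*s^7)
        + (3141593/1000000 - π) * ((1 - s) ^ 6 * (1 + (213881/46656)*s + (424079/46656)*s^2
          + (1909273/186624)*s^3 + (218857/31104)*s^4 + (274183/93312)*s^5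
          + (63965/93312)*s^6 + (12793/186624)*s^7)) := by ring
  rw [e]
  have h6 : (0:ℝ) < (1 - s) ^ 6 := pow_pos (by linarith) 6
  have t1 : (0:ℝ) < (858407/1000000) + (129243947567/46656000000)*s
      + (216841382153/46656000000)*s^2 + (903284308111/186624000000)*s^3
      + (100003380799/31104000000)*s^4 + (123507606481/93312000000)*s^5
      + (5736600751/18662400000)*s^6 + (5736600751/186624000000)*s^7 := by
    have h2 := pow_pos hs0 2; have h3 := pow_pos hs0 3; have h4 := pow_pos hs0 4
    have h5 := pow_pos hs0 5; have h6 := pow_pos hs0 6; have h7 := pow_pos hs0 7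
    linarith
  have t2 : (0:ℝ) < 1 + (213881/46656)*s + (424079/46656)*s^2
      + (1909273/186624)*s^3 + (218857/31104)*s^4 + (274183/93312)*s^5
      + (63965/93312)*s^6 + (12793/186624)*s^7 := by
    have h2 := pow_pos hs0 2; have h3 := pow_pos hs0 3; have h4 := pow_pos hs0 4
    have h5 := pow_pos hs0 5; have h6 := pow_pos hs0 6; have h7 := pow_pos hs0 7
    linarith
  have hπ := pi_ub
  nlinarith [mul_pos h6 t1, mul_pos h6 t2, mul_nonneg (le_of_lt (mul_pos h6 t2)) (by linarith : (0:ℝ) ≤ 3141593/1000000 - π)]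

lemma key2 (s x : ℝ) (hs0 : 0 < s) (hs1 : s < 1) (hx2 : x ^ 2 = 1 - s ^ 2) :
    0 < x ^ 2 * (2 + s) ^ 3 - π * x ^ 2 * (4 * s ^ 2 + 3 * s + 2) - 10 * s ^ 2 * (2 + s) ^ 3
      + 10 * π * (2 * s + 1) * s ^ 2 * (2 + s)
      - s ^ 3 * (2 + s) ^ 3 *
        (-10 * (1 - π / 3) - 24 * (1 / 6 - π / 18) * x ^ 2 - 30 * (3 / 40 - 5 * π / 216) * x ^ 4
          - 28 * (5 / 112 - 17 * π / 1296) * x ^ 6 - 18 * (35 / 1152 - 269 * π / 31104) * x ^ 8) := by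
  have hx4 : x ^ 4 = (1 - s ^ 2) ^ 2 := by rw [show x ^ 4 = (x ^ 2) ^ 2 by ring, hx2]
  have hx6 : x ^ 6 = (1 - s ^ 2) ^ 3 := by rw [show x ^ 6 = (x ^ 2) ^ 3 by ring, hx2]
  have hx8 : x ^ 8 = (1 - s ^ 2) ^ 4 := by rw [show x ^ 8 = (x ^ 2) ^ 4 by ring, hx2]
  rw [hx8, hx6, hx4, hx2]
  have e : (1 - s ^ 2) * (2 + s) ^ 3 - π * (1 - s ^ 2) * (4 * s ^ 2 + 3 * s + 2)
      - 10 * s ^ 2 * (2 + s) ^ 3 + 10 * π * (2 * s + 1) * s ^ 2 * (2 + s)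
      - s ^ 3 * (2 + s) ^ 3 *
        (-10 * (1 - π / 3) - 24 * (1 / 6 - π / 18) * (1 - s ^ 2)
          - 30 * (3 / 40 - 5 * π / 216) * (1 - s ^ 2) ^ 2
          - 28 * (5 / 112 - 17 * π / 1296) * (1 - s ^ 2) ^ 3
          - 18 * (35 / 1152 - 269 * π / 31104) * (1 - s ^ 2) ^ 4)
      = (1 - s) ^ 6 * ((858407/500000) + (2575221/200000)*s + (13026547/500000)*s^2
          + (764898281/25920000)*s^3 + (1915479281/86400000)*s^4 + (14361059/1280000)*s^5
          + (18984332257/5184000000)*s^6 + (99911483/144000000)*s^7 + (99911483/1728000000)*s^8)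
        + (3141593/1000000 - π) * ((1 - s) ^ 6 * (2 + 15*s + 42*s^2 + (39575/648)*s^3
          + (22915/432)*s^4 + (925/32)*s^5 + (50551/5184)*s^6 + (269/144)*s^7
          + (269/1728)*s^8)) := by ring
  rw [e]
  have h6 : (0:ℝ) < (1 - s) ^ 6 := pow_pos (by linarith) 6
  have t1 : (0:ℝ) < (858407/500000) + (2575221/200000)*s + (13026547/500000)*s^2
      + (764898281/25920000)*s^3 + (1915479281/86400000)*s^4 + (14361059/1280000)*s^5
      + (18984332257/5184000000)*s^6 + (99911483/144000000)*s^7 + (99911483/1728000000)*s^8 := by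
    have h2 := pow_pos hs0 2; have h3 := pow_pos hs0 3; have h4 := pow_pos hs0 4
    have h5 := pow_pos hs0 5; have h6 := pow_pos hs0 6; have h7 := pow_pos hs0 7
    have h8 := pow_pos hs0 8
    linarith
  have t2 : (0:ℝ) < 2 + 15*s + 42*s^2 + (39575/648)*s^3 + (22915/432)*s^4 + (925/32)*s^5
      + (50551/5184)*s^6 + (269/144)*s^7 + (269/1728)*s^8 := by
    have h2 := pow_pos hs0 2; have h3 := pow_pos hs0 3; have h4 := pow_pos hs0 4
    have h5 := pow_pos hs0 5; have h6 := pow_pos hs0 6; have h7 := pow_pos hs0 7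
    have h8 := pow_pos hs0 8
    linarith
  have hπ := pi_ub
  nlinarith [mul_pos h6 t1, mul_nonneg (le_of_lt (mul_pos h6 t2)) (by linarith : (0:ℝ) ≤ 3141593/1000000 - π)]

lemma hasDerivAt_sqrt1 (x : ℝ) (hx : 0 < 1 - x ^ 2) :
    HasDerivAt (fun y : ℝ => Real.sqrt (1 - y ^ 2)) (-x / Real.sqrt (1 - x ^ 2)) x := by
  have h1 : HasDerivAt (fun y : ℝ => 1 - y ^ 2) (-(2 * x)) x := by
    simpa using ((hasDerivAt_pow 2 x).const_sub 1)
  have h2 := (Real.hasDerivAt_sqrt (ne_of_gt hx)).comp x h1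
  have hs : Real.sqrt (1 - x ^ 2) ≠ 0 := ne_of_gt (Real.sqrt_pos.2 hx)
  refine h2.congr_deriv ?_
  field_simp

lemma hasDerivAt_U9 (x : ℝ) : HasDerivAt U9 (U9d x) x := by
  have h1 : HasDerivAt (fun y : ℝ => (1 - π / 3) * y) (1 - π / 3) x := by
    simpa using (hasDerivAt_id x).const_mul (1 - π / 3)
  have h3 := (hasDerivAt_pow 3 x).const_mul (1 / 6 - π / 18)
  have h5 := (hasDerivAt_pow 5 x).const_mul (3 / 40 - 5 * π / 216)
  have h7 := (hasDerivAt_pow 7 x).const_mul (5 / 112 - 17 * π / 1296)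
  have h9 := (hasDerivAt_pow 9 x).const_mul (35 / 1152 - 269 * π / 31104)
  have := (((h1.add h3).add h5).add h7).add h9
  refine this.congr_deriv ?_
  simp [U9d]
  ring

lemma hasDerivAt_U9d (x : ℝ) : HasDerivAt U9d (U9dd x) x := by
  have h2 := (hasDerivAt_pow 2 x).const_mul (3 * (1 / 6 - π / 18))
  have h4 := (hasDerivAt_pow 4 x).const_mul (5 * (3 / 40 - 5 * π / 216))
  have h6 := (hasDerivAt_pow 6 x).const_mul (7 * (5 / 112 - 17 * π / 1296))
  have h8 := (hasDerivAt_pow 8 x).const_mul (9 * (35 / 1152 - 269 * π / 31104))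
  have := ((((hasDerivAt_const x (1 - π / 3)).add h2).add h4).add h6).add h8
  refine this.congr_deriv ?_
  simp [U9dd]
  ring

lemma hasDerivAt_Nf (x : ℝ) (h0 : -1 < x) (h1 : x < 1) : HasDerivAt Nf (NP x) x := by
  have hx2 : 0 < 1 - x ^ 2 := by nlinarith
  have hs0 : 0 < Real.sqrt (1 - x ^ 2) := Real.sqrt_pos.2 hx2
  have hss : Real.sqrt (1 - x ^ 2) ^ 2 = 1 - x ^ 2 := Real.sq_sqrt hx2.le
  have harc : HasDerivAt Real.arcsin (1 / Real.sqrt (1 - x ^ 2)) x :=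
    Real.hasDerivAt_arcsin (by linarith) (by linarith)
  have hden : HasDerivAt (fun y : ℝ => 2 + Real.sqrt (1 - y ^ 2))
      (-x / Real.sqrt (1 - x ^ 2)) x := (hasDerivAt_sqrt1 x hx2).const_add 2
  have hdenne : 2 + Real.sqrt (1 - x ^ 2) ≠ 0 := by positivity
  have hnum : HasDerivAt (fun y : ℝ => π * y) π x := by
    simpa using (hasDerivAt_id x).const_mul π
  have hq := hnum.div hden hdenne
  have := (harc.sub hq).sub (hasDerivAt_U9 x)
  set s := Real.sqrt (1 - x ^ 2) with hsdef
  have hsne : s ≠ 0 := ne_of_gt hs0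
  refine this.congr_deriv ?_
  simp only [NP, ← hsdef]
  have key : π * (2 + s) - π * x * (-x / s) = π * (2 * s + 1) / s := by
    field_simp
    linear_combination hss
  rw [key, div_div]

lemma hasDerivAt_NP (x : ℝ) (h0 : -1 < x) (h1 : x < 1) : HasDerivAt NP (NPP x) x := by
  have hx2 : 0 < 1 - x ^ 2 := by nlinarith
  have hs0 : 0 < Real.sqrt (1 - x ^ 2) := Real.sqrt_pos.2 hx2
  have hsne : Real.sqrt (1 - x ^ 2) ≠ 0 := ne_of_gt hs0
  have hS := hasDerivAt_sqrt1 x hx2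
  have hinv : HasDerivAt (fun y : ℝ => 1 / Real.sqrt (1 - y ^ 2))
      (-(-x / Real.sqrt (1 - x ^ 2)) / Real.sqrt (1 - x ^ 2) ^ 2) x := by
    simpa [one_div] using hS.fun_inv hsne
  have hnum : HasDerivAt (fun y : ℝ => π * (2 * Real.sqrt (1 - y ^ 2) + 1))
      (π * (2 * (-x / Real.sqrt (1 - x ^ 2)))) x := ((hS.const_mul 2).add_const 1).const_mul π
  have hdd : HasDerivAt
      (fun y : ℝ => Real.sqrt (1 - y ^ 2) * (2 + Real.sqrt (1 - y ^ 2)) ^ 2)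
      ((-x / Real.sqrt (1 - x ^ 2)) * (2 + Real.sqrt (1 - x ^ 2)) ^ 2
        + Real.sqrt (1 - x ^ 2) * (2 * (2 + Real.sqrt (1 - x ^ 2)) ^ 1
            * (-x / Real.sqrt (1 - x ^ 2)))) x :=
    hS.mul ((hS.const_add 2).pow 2)
  have hddne : Real.sqrt (1 - x ^ 2) * (2 + Real.sqrt (1 - x ^ 2)) ^ 2 ≠ 0 := by positivity
  have hq := hnum.div hdd hddne
  have := (hinv.sub hq).sub (hasDerivAt_U9d x)
  set s := Real.sqrt (1 - x ^ 2) with hsdef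
  have h2s : (2:ℝ) + s ≠ 0 := by positivity
  refine this.congr_deriv ?_
  simp only [NPP, ← hsdef]
  field_simp
  ring

lemma Nf_cont : Continuous Nf := by
  unfold Nf U9
  apply Continuous.sub
  apply Continuous.sub Real.continuous_arcsin
  · apply Continuous.div (by fun_prop) (by fun_prop)
    intro y
    positivity
  · fun_prop

theorem shaferPi_n5 (x : ℝ) (hx : x ∈ Set.Ioo (0 : ℝ) 1) :
    (1 - π / 3) * x + (1 / 6 - π / 18) * x ^ 3 + (3 / 40 - 5 * π / 216) * x ^ 5
        + (5 / 112 - 17 * π / 1296) * x ^ 7 + (35 / 1152 - 269 * π / 31104) * x ^ 9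
        + (63 / 2816 - 1163 * π / 186624) * x ^ 11
      < Real.arcsin x - π * x / (2 + Real.sqrt (1 - x ^ 2)) ∧
    Real.arcsin x - π * x / (2 + Real.sqrt (1 - x ^ 2))
      < (1 - π / 3) * x + (1 / 6 - π / 18) * x ^ 3 + (3 / 40 - 5 * π / 216) * x ^ 5
        + (5 / 112 - 17 * π / 1296) * x ^ 7 + (35 / 1152 - 269 * π / 31104) * x ^ 9
        + (-(53089 / 40320) + 13493 * π / 31104) * x ^ 11 := by
  obtain ⟨hx0, hx1⟩ := hx
  constructor
  · -- lower bound
    have mono : StrictMonoOn (fun y => Nf y - (63 / 2816 - 1163 * π / 186624) * y ^ 11)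
        (Set.Ico 0 1) := by
      apply strictMonoOn_of_deriv_pos (convex_Ico 0 1)
      · exact (Nf_cont.sub (by fun_prop)).continuousOn
      · intro y hy
        rw [interior_Ico] at hy
        have hD : HasDerivAt (fun y => Nf y - (63 / 2816 - 1163 * π / 186624) * y ^ 11)
            (NP y - (63 / 2816 - 1163 * π / 186624) * (11 * y ^ 10)) y := by
          have := (hasDerivAt_Nf y (by linarith [hy.1]) hy.2).sub
            ((hasDerivAt_pow 11 y).const_mul (63 / 2816 - 1163 * π / 186624))
          refine this.congr_deriv ?_
          norm_num
        rw [hD.deriv]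
        have hy2 : 0 < 1 - y ^ 2 := by nlinarith [hy.1, hy.2]
        set s := Real.sqrt (1 - y ^ 2) with hs
        have hs0 : 0 < s := Real.sqrt_pos.2 hy2
        have hss : s ^ 2 = 1 - y ^ 2 := Real.sq_sqrt hy2.le
        have hs1 : s < 1 := by nlinarith [hy.1]
        have hk := key1 s y hs0 hs1 (by nlinarith)
        have hdpos : 0 < s * (2 + s) ^ 2 := by positivity
        have e : NP y - (63 / 2816 - 1163 * π / 186624) * (11 * y ^ 10)
            = ((2 + s) ^ 2 - π * (2 * s + 1) - s * (2 + s) ^ 2 *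
              ((1 - π / 3) + 3 * (1 / 6 - π / 18) * y ^ 2 + 5 * (3 / 40 - 5 * π / 216) * y ^ 4
                + 7 * (5 / 112 - 17 * π / 1296) * y ^ 6
                + 9 * (35 / 1152 - 269 * π / 31104) * y ^ 8
                + 11 * (63 / 2816 - 1163 * π / 186624) * y ^ 10)) / (s * (2 + s) ^ 2) := by
          simp only [NP, U9d, ← hs]
          field_simp
          ring
        rw [e]
        exact div_pos hk hdpos
    have h := mono (Set.left_mem_Ico.2 one_pos) ⟨hx0.le, hx1⟩ hx0
    simp only [Nf, U9] at h
    norm_num [Real.arcsin_zero] at h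
    linarith
  · -- upper bound
    -- K positivity
    have Kpos : ∀ y ∈ Set.Ioo (0:ℝ) 1, 0 < y * NP y - 11 * Nf y := by
      have mono : StrictMonoOn (fun y => y * NP y - 11 * Nf y) (Set.Ico 0 1) := by
        apply strictMonoOn_of_deriv_pos (convex_Ico 0 1)
        · apply ContinuousOn.sub
          · apply ContinuousOn.mul continuousOn_id
            unfold NP U9d
            apply ContinuousOn.sub
            apply ContinuousOn.sub
            · apply ContinuousOn.div continuousOn_const (by fun_prop)
              intro y hy
              have : 0 < 1 - y ^ 2 := by nlinarith [hy.1, hy.2]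
              exact ne_of_gt (Real.sqrt_pos.2 this)
            · apply ContinuousOn.div (by fun_prop) (by fun_prop)
              intro y hy
              have h2 : 0 < 1 - y ^ 2 := by nlinarith [hy.1, hy.2]
              have := Real.sqrt_pos.2 h2
              positivity
            · fun_prop
          · exact (continuous_const.mul Nf_cont).continuousOn
        · intro y hy
          rw [interior_Ico] at hy
          have hNf := hasDerivAt_Nf y (by linarith [hy.1]) hy.2
          have hNP := hasDerivAt_NP y (by linarith [hy.1]) hy.2
          have hD : HasDerivAt (fun y => y * NP y - 11 * Nf y)
              (1 * NP y + y * NPP y - 11 * NP y) y :=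
            ((hasDerivAt_id y).mul hNP).sub (hNf.const_mul 11)
          rw [hD.deriv]
          have hy2 : 0 < 1 - y ^ 2 := by nlinarith [hy.1, hy.2]
          set s := Real.sqrt (1 - y ^ 2) with hs
          have hs0 : 0 < s := Real.sqrt_pos.2 hy2
          have hss : s ^ 2 = 1 - y ^ 2 := Real.sq_sqrt hy2.le
          have hs1 : s < 1 := by nlinarith [hy.1]
          have hk := key2 s y hs0 hs1 (by nlinarith)
          have hdpos : 0 < s ^ 3 * (2 + s) ^ 3 := by positivity
          have e : 1 * NP y + y * NPP y - 11 * NP y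
              = (y ^ 2 * (2 + s) ^ 3 - π * y ^ 2 * (4 * s ^ 2 + 3 * s + 2)
                - 10 * s ^ 2 * (2 + s) ^ 3 + 10 * π * (2 * s + 1) * s ^ 2 * (2 + s)
                - s ^ 3 * (2 + s) ^ 3 *
                  (-10 * (1 - π / 3) - 24 * (1 / 6 - π / 18) * y ^ 2
                    - 30 * (3 / 40 - 5 * π / 216) * y ^ 4
                    - 28 * (5 / 112 - 17 * π / 1296) * y ^ 6
                    - 18 * (35 / 1152 - 269 * π / 31104) * y ^ 8)) / (s ^ 3 * (2 + s) ^ 3) := by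
            simp only [NP, NPP, U9d, U9dd, ← hs]
            field_simp
            ring
          rw [e]
          exact div_pos hk hdpos
      intro y hy
      have h := mono (Set.left_mem_Ico.2 one_pos) ⟨hy.1.le, hy.2⟩ hy.1
      simp only [Nf, U9] at h
      norm_num [Real.arcsin_zero] at h
      simp only [Nf, U9]
      linarith
    -- G = Nf / x^11 strictly monotone on Ioc 0 1
    have mono : StrictMonoOn (fun y => Nf y / y ^ 11) (Set.Ioc 0 1) := by
      apply strictMonoOn_of_deriv_pos (convex_Ioc 0 1)
      · apply ContinuousOn.div Nf_cont.continuousOn (by fun_prop)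
        intro y hy
        exact pow_ne_zero _ (ne_of_gt hy.1)
      · intro y hy
        rw [interior_Ioc] at hy
        have hNf := hasDerivAt_Nf y (by linarith [hy.1]) hy.2
        have hD : HasDerivAt (fun y => Nf y / y ^ 11)
            ((NP y * y ^ 11 - Nf y * (↑11 * y ^ 10)) / (y ^ 11) ^ 2) y :=
          hNf.div (hasDerivAt_pow 11 y) (pow_ne_zero _ (ne_of_gt hy.1))
        rw [hD.deriv]
        apply div_pos ?_ (pow_pos (pow_pos hy.1 11) 2)
        have hK := Kpos y hy
        have h10 : (0:ℝ) < y ^ 10 := pow_pos hy.1 10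
        nlinarith [mul_pos h10 hK]
    have h := mono ⟨hx0, hx1.le⟩ (Set.right_mem_Ioc.2 one_pos) hx1
    have hNf1 : Nf 1 = -(53089 / 40320) + 13493 * π / 31104 := by
      simp only [Nf, U9]
      norm_num [Real.arcsin_one]
      ring
    have h' : Nf x / x ^ 11 < Nf 1 / 1 ^ 11 := h
    rw [hNf1, one_pow, div_one] at h'
    have h2 := (div_lt_iff₀ (pow_pos hx0 11)).1 h'
    simp only [Nf, U9] at h2
    linarith
end
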